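/- arXiv:2302.12809 — 4 statements merged into one kernel-verified Lean document; each statement's English description precedes it below -/
import Mathlib

section
/- Let P be a submonoid of a (discrete) group G. The map L̄_p ↦ L̄_p ⊗ L_p, i.e., ⊕_{n=1}^∞ L_p^{⊗n} ↦ ⊕_{n=2}^∞ L_p^{⊗n} (p ∈ P), extends to an isometric unital *-homomorphism from 𝒯̄_λ(P) into the bounded operators on ⊕_{n=2}^∞ ℓ²(P)^{⊗n}; that is, there exists a unital star-algebra homomorphism ρ defined on 𝒯̄_λ(P) with ρ(L̄_p) = ⊕_{n=2}^∞ L_p^{⊗n} for all p ∈ P, and ρ is isometric. -/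
noncomputable section
set_option synthInstance.maxHeartbeats 1000000
set_option maxHeartbeats 1000000
set_option linter.unusedVariables false

open scoped ENNReal

/-- `ℓ²(ι)` with complex coefficients. -/
abbrev l2 (ι : Type*) : Type _ := lp (fun _ : ι => ℂ) 2

/-- The canonical orthonormal basis vector `δ_i` of `ℓ²(ι)`. -/
noncomputable def ket {ι : Type*} (i : ι) : l2 ι :=
  haveI := Classical.decEq ι
  lp.single 2 i 1

variable {G : Type*} [Group G]

/-- A word `a = (p₁, p₂, …, p_{2k-1}, p_{2k})` of even length over `P`, recorded as the list of
its consecutive pairs `(p₁,p₂), (p₃,p₄), …, (p_{2k-1},p_{2k})`. -/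
abbrev Word (P : Submonoid G) := List (P × P)

/-- `ȧ = p₁⁻¹ p₂ ⋯ p_{2k-1}⁻¹ p_{2k} ∈ G`. -/
def wordElem (P : Submonoid G) (w : Word P) : G :=
  (w.map (fun pq => ((pq.1 : G))⁻¹ * (pq.2 : G))).prod

/-- A word is neutral if `ȧ = e`. -/
def IsNeutral (P : Submonoid G) (w : Word P) : Prop := wordElem P w = 1

/-- `V̇_a = V_{p₁}^* V_{p₂} ⋯ V_{p_{2k-1}}^* V_{p_{2k}}`. -/
def dotted {A : Type*} [Monoid A] [Star A] (P : Submonoid G) (V : P → A) (w : Word P) : A :=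
  (w.map (fun pq => star (V pq.1) * V pq.2)).prod

/-- The constructible right ideal `K(a) = {p ∈ P : L̇_a δ_p = δ_p}`, where `L` is the left
regular representation of `P` on `ℓ²(P)`. -/
def KIdeal (P : Submonoid G) (L : P → (l2 P →L[ℂ] l2 P)) (w : Word P) : Set P :=
  {p : P | dotted P L w (ket p) = ket p}

/-- The index set `X = ⨿_{n ≥ 1} Pⁿ` underlying `ℋ̄ = ⊕_{n≥1} ℓ²(P)^{⊗n} ≅ ℓ²(X)`. -/
abbrev PTuples (P : Submonoid G) := Σ n : ℕ, Fin (n + 1) → P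

/-- Coordinatewise left multiplication of a tuple by `p`; `L̄_p δ_x = δ_{p • x}`. -/
def pMul (P : Submonoid G) (p : P) (x : PTuples P) : PTuples P := ⟨x.1, fun i => p * x.2 i⟩

/-- The index set for `⊕_{n ≥ 2} ℓ²(P)^{⊗n}`: tuples of length `≥ 2`. -/
abbrev PTuples2 (P : Submonoid G) := Σ n : ℕ, Fin (n + 2) → P

/-- Coordinatewise left multiplication by `p` on tuples of length `≥ 2`. -/
def pMul2 (P : Submonoid G) (p : P) (x : PTuples2 P) : PTuples2 P := ⟨x.1, fun i => p * x.2 i⟩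

namespace Dbl
variable {α β γ : Type*}

lemma summable_sq (f : l2 α) : Summable fun a => ‖f a‖ ^ (2:ℝ≥0∞).toReal :=
  (memℓp_gen_iff (by norm_num)).1 (lp.memℓp f)

def embedFun (m : α → β) (f : l2 α) : ∀ _ : β, ℂ := Function.extend m (⇑f) 0

lemma memℓp_embedFun {m : α → β} (hm : Function.Injective m) (f : l2 α) :
    Memℓp (embedFun m f) 2 := by
  apply memℓp_gen
  have h2 : (fun b => ‖embedFun m f b‖ ^ (2:ℝ≥0∞).toReal)
      = Function.extend m (fun a => ‖f a‖ ^ (2:ℝ≥0∞).toReal) 0 := by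
    funext b
    rcases em (∃ a, m a = b) with ⟨a, rfl⟩ | h
    · rw [embedFun, hm.extend_apply, hm.extend_apply]
    · rw [embedFun, Function.extend_apply' _ _ _ h, Function.extend_apply' _ _ _ h]
      norm_num
  rw [h2]
  exact (summable_extend_zero hm).2 (summable_sq f)

def embedLi {m : α → β} (hm : Function.Injective m) : l2 α →ₗᵢ[ℂ] l2 β where
  toFun f := ⟨embedFun m f, memℓp_embedFun hm f⟩
  map_add' f g := by
    apply lp.ext
    rw [lp.coeFn_add]
    funext b
    rcases em (∃ a, m a = b) with ⟨a, rfl⟩ | h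
    · simp only [embedFun, hm.extend_apply, Pi.add_apply, lp.coeFn_add]
    · simp only [embedFun, Function.extend_apply' _ _ _ h, Pi.add_apply]
      norm_num
  map_smul' c f := by
    apply lp.ext
    rw [lp.coeFn_smul]
    funext b
    rcases em (∃ a, m a = b) with ⟨a, rfl⟩ | h
    · simp only [embedFun, hm.extend_apply, Pi.smul_apply, lp.coeFn_smul, RingHom.id_apply]
    · simp only [embedFun, Function.extend_apply' _ _ _ h, Pi.smul_apply]
      norm_num
  norm_map' f := by
    rw [lp.norm_eq_tsum_rpow (by norm_num) _, lp.norm_eq_tsum_rpow (by norm_num) f]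
    congr 1
    have h2 : (fun b => ‖embedFun m f b‖ ^ (2:ℝ≥0∞).toReal)
        = Function.extend m (fun a => ‖f a‖ ^ (2:ℝ≥0∞).toReal) 0 := by
      funext b
      rcases em (∃ a, m a = b) with ⟨a, rfl⟩ | h
      · rw [embedFun, hm.extend_apply, hm.extend_apply]
      · rw [embedFun, Function.extend_apply' _ _ _ h, Function.extend_apply' _ _ _ h]
        norm_num
    calc ∑' b, ‖(⟨embedFun m f, memℓp_embedFun hm f⟩ : l2 β) b‖ ^ (2:ℝ≥0∞).toReal
        = ∑' b, Function.extend m (fun a => ‖f a‖ ^ (2:ℝ≥0∞).toReal) 0 b := by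
          exact congrArg (fun g => ∑' b, g b) h2
      _ = ∑' a, ‖f a‖ ^ (2:ℝ≥0∞).toReal := tsum_extend_zero hm _

end Dbl

namespace Dbl
variable {α β γ : Type*}

def precompFun (m : α → β) (f : l2 β) : ∀ _ : α, ℂ := fun a => f (m a)

lemma memℓp_precomp {m : α → β} (hm : Function.Injective m) (f : l2 β) :
    Memℓp (precompFun m f) 2 := by
  apply memℓp_gen
  exact (summable_sq f).comp_injective hm

def precompL (m : α → β) (hm : Function.Injective m) : l2 β →L[ℂ] l2 α :=
  LinearMap.mkContinuous
    { toFun := fun f => ⟨precompFun m f, memℓp_precomp hm f⟩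
      map_add' := fun f g => by
        apply lp.ext; funext a
        show (f + g) (m a) = _
        rw [lp.coeFn_add]
        rfl
      map_smul' := fun c f => by
        apply lp.ext; funext a
        show (c • f) (m a) = _
        rw [lp.coeFn_smul]
        rfl }
    1 (fun f => by
      rw [one_mul]
      rw [lp.norm_eq_tsum_rpow (by norm_num) _, lp.norm_eq_tsum_rpow (by norm_num) f]
      apply Real.rpow_le_rpow (tsum_nonneg fun a => Real.rpow_nonneg (norm_nonneg _) _) ?_
        (by norm_num)
      exact Summable.tsum_le_tsum_of_inj m hm (fun b _ => Real.rpow_nonneg (norm_nonneg _) _)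
        (fun a => le_rfl) ((summable_sq f).comp_injective hm) (summable_sq f))

lemma norm_precompL_le (m : α → β) (hm : Function.Injective m) : ‖precompL m hm‖ ≤ 1 :=
  LinearMap.mkContinuous_norm_le _ zero_le_one _

@[simp] lemma precompL_apply (m : α → β) (hm : Function.Injective m) (f : l2 β) (a : α) :
    (precompL m hm f) a = f (m a) := rfl

def embedL (m : α → β) (hm : Function.Injective m) : l2 α →L[ℂ] l2 β :=
  (embedLi hm).toContinuousLinearMap

lemma norm_embedL (m : α → β) (hm : Function.Injective m) (f : l2 α) :
    ‖embedL m hm f‖ = ‖f‖ := (embedLi hm).norm_map f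

lemma norm_embedL_le (m : α → β) (hm : Function.Injective m) : ‖embedL m hm‖ ≤ 1 :=
  ContinuousLinearMap.opNorm_le_bound _ zero_le_one
    (fun f => by rw [norm_embedL, one_mul])

lemma embedL_apply (m : α → β) (hm : Function.Injective m) (f : l2 α) (b : β) :
    (embedL m hm f) b = Function.extend m (⇑f) 0 b := rfl

lemma ket_apply {ι : Type*} (i j : ι) :
    (ket i : l2 ι) j = letI := Classical.decEq ι; if j = i then 1 else 0 := by
  letI := Classical.decEq ι
  rcases eq_or_ne j i with rfl | h
  · rw [if_pos rfl]
    exact lp.single_apply_self _ _ _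
  · rw [if_neg h]
    exact lp.single_apply_ne _ _ _ h

lemma ext_ket {A B : l2 α →L[ℂ] l2 β} (h : ∀ a, A (ket a) = B (ket a)) : A = B := by
  letI := Classical.decEq α
  refine ContinuousLinearMap.ext fun f => ?_
  have hf : HasSum (fun i => lp.single 2 i (f i)) f := lp.hasSum_single (by norm_num) f
  have key : ∀ (C : l2 α →L[ℂ] l2 β), HasSum (fun i => f i • C (ket i)) (C f) := by
    intro C
    have h2 := hf.mapL C
    have h4 : (fun i => C (lp.single 2 i (f i))) = fun i => f i • C (ket i) := by
      funext i
      have h5 : lp.single 2 i (f i) = f i • (ket i : l2 α) := by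
        rw [ket, ← lp.single_smul]
        norm_num
      rw [h5, C.map_smul]
    rwa [h4] at h2
  have hA := key A
  have hB := key B
  simp_rw [h] at hA
  exact hA.unique hB

lemma embedL_ket {m : α → β} (hm : Function.Injective m) (a : α) :
    embedL m hm (ket a) = ket (m a) := by
  classical
  apply lp.ext; funext b
  rw [embedL_apply]
  rcases em (∃ a', m a' = b) with ⟨a', rfl⟩ | h
  · rw [hm.extend_apply, ket_apply, ket_apply]
    by_cases hc : a' = a
    · simp [hc]
    · rw [if_neg hc, if_neg (fun h2 => hc (hm h2))]
  · rw [Function.extend_apply' _ _ _ h, ket_apply, if_neg (fun hc => h ⟨a, hc.symm⟩)]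
    rfl

lemma precompL_ket_mem {m : α → β} (hm : Function.Injective m) (a : α) :
    precompL m hm (ket (m a)) = ket a := by
  classical
  apply lp.ext; funext a'
  rw [precompL_apply, ket_apply, ket_apply]
  by_cases hc : a' = a
  · simp [hc]
  · rw [if_neg hc, if_neg (fun h2 => hc (hm h2))]

lemma precompL_ket_not_mem {m : α → β} (hm : Function.Injective m) {b : β}
    (h : b ∉ Set.range m) : precompL m hm (ket b) = 0 := by
  classical
  apply lp.ext; funext a'
  rw [precompL_apply, ket_apply, if_neg (fun hc => h ⟨a', hc⟩)]
  rfl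

lemma precompL_comp_embedL {m : α → β} (hm : Function.Injective m) :
    (precompL m hm).comp (embedL m hm) = ContinuousLinearMap.id ℂ (l2 α) := by
  apply ext_ket
  intro a
  simp [ContinuousLinearMap.comp_apply, embedL_ket hm, precompL_ket_mem hm]


open scoped InnerProductSpace in
lemma adjoint_embedL {m : α → β} (hm : Function.Injective m) :
    ContinuousLinearMap.adjoint (embedL m hm) = precompL m hm := by
  symm
  rw [ContinuousLinearMap.eq_adjoint_iff]
  intro x y
  rw [lp.inner_eq_tsum, lp.inner_eq_tsum]
  have h4 : (fun b => ⟪x b, (embedL m hm y) b⟫_ℂ)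
      = Function.extend m (fun a => ⟪x (m a), y a⟫_ℂ) 0 := by
    funext b
    rcases em (∃ a', m a' = b) with ⟨a', rfl⟩ | h
    · rw [hm.extend_apply, embedL_apply, hm.extend_apply]
    · rw [Function.extend_apply' _ _ _ h, embedL_apply, Function.extend_apply' _ _ _ h]
      simp
  rw [h4, tsum_extend_zero hm]
  rfl

lemma adjoint_precompL {m : α → β} (hm : Function.Injective m) :
    ContinuousLinearMap.adjoint (precompL m hm) = embedL m hm := by
  rw [← adjoint_embedL hm, ContinuousLinearMap.adjoint_adjoint]

end Dbl

namespace Dbl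
variable (P : Submonoid G)

def jmap (x : PTuples2 P) : PTuples P := ⟨x.1 + 1, x.2⟩

def projF (n : ℕ) (i : Fin (n + 2)) : Fin (n + 1) :=
  ⟨min i.1 n, Nat.lt_succ_of_le (min_le_right _ _)⟩

def sF (n : ℕ) (i : Fin (n + 1)) : Fin (n + 2) := ⟨i.1, by omega⟩

lemma projF_sF (n : ℕ) (i : Fin (n + 1)) : projF n (sF n i) = i := by
  have : i.1 ≤ n := Nat.lt_succ_iff.mp i.2
  simp [projF, sF, Nat.min_eq_left this]

lemma projF_sF_projF (n : ℕ) (i : Fin (n + 2)) : projF n (sF n (projF n i)) = projF n i :=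
  projF_sF n _

def wmap (x : PTuples P) : PTuples2 P := ⟨x.1, fun i => x.2 (projF x.1 i)⟩

lemma jmap_inj : Function.Injective (jmap P) := by
  rintro ⟨n, f⟩ ⟨n', f'⟩ h
  simp only [jmap, Sigma.mk.inj_iff, add_left_inj] at h
  obtain ⟨rfl, h2⟩ := h
  rw [heq_iff_eq] at h2
  subst h2
  rfl

lemma wmap_inj : Function.Injective (wmap P) := by
  rintro ⟨n, f⟩ ⟨n', f'⟩ h
  simp only [wmap, Sigma.mk.inj_iff] at h
  obtain ⟨rfl, h2⟩ := h
  rw [heq_iff_eq] at h2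
  have h3 : f = f' := by
    funext i
    have h4 := congrFun h2 (sF n i)
    rwa [projF_sF n i] at h4
  subst h3
  rfl

lemma pMul_jmap (p : P) (x : PTuples2 P) : pMul P p (jmap P x) = jmap P (pMul2 P p x) := rfl

lemma wmap_pMul (p : P) (x : PTuples P) : wmap P (pMul P p x) = pMul2 P p (wmap P x) := rfl

lemma mem_range_jmap (x : PTuples P) : x ∈ Set.range (jmap P) ↔ x.1 ≠ 0 := by
  constructor
  · rintro ⟨y, rfl⟩
    simp [jmap]
  · intro h
    obtain ⟨n, f⟩ := x
    cases n with
    | zero => simp at h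
    | succ n => exact ⟨⟨n, f⟩, rfl⟩

lemma pMul_mem_range_jmap (p : P) (x : PTuples P) :
    pMul P p x ∈ Set.range (jmap P) ↔ x ∈ Set.range (jmap P) := by
  rw [mem_range_jmap, mem_range_jmap]
  rfl

lemma pMul2_mem_range_wmap (p : P) (y : PTuples2 P)
    (h : pMul2 P p y ∈ Set.range (wmap P)) : y ∈ Set.range (wmap P) := by
  obtain ⟨⟨n, f⟩, hf⟩ := h
  obtain ⟨ny, g⟩ := y
  have h1 : ny = n := congrArg Sigma.fst hf.symm
  subst h1
  have h2 : (fun i => p * g i) = fun i => f (projF ny i) := by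
    have := hf.symm
    simp only [pMul2, wmap, Sigma.mk.inj_iff, heq_iff_eq] at this
    exact this.2
  refine ⟨⟨ny, fun i => g (sF ny i)⟩, ?_⟩
  simp only [wmap, Sigma.mk.inj_iff, heq_iff_eq, true_and]
  funext i
  have e1 : p * g (sF ny (projF ny i)) = f (projF ny (sF ny (projF ny i))) :=
    congrFun h2 (sF ny (projF ny i))
  rw [projF_sF_projF] at e1
  have e2 : p * g (sF ny (projF ny i)) = p * g i := by
    rw [e1]
    exact (congrFun h2 i).symm
  have e3 : (p : G) * (g (sF ny (projF ny i)) : G) = (p : G) * (g i : G) := by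
    exact_mod_cast congrArg Subtype.val e2
  exact Subtype.ext (mul_left_cancel e3)

end Dbl


namespace Dbl
variable {G : Type*} [Group G] (P : Submonoid G)

def theJ : l2 (PTuples2 P) →L[ℂ] l2 (PTuples P) := embedL _ (jmap_inj P)
def theK : l2 (PTuples P) →L[ℂ] l2 (PTuples2 P) := precompL _ (jmap_inj P)
def theW : l2 (PTuples P) →L[ℂ] l2 (PTuples2 P) := embedL _ (wmap_inj P)
def theW' : l2 (PTuples2 P) →L[ℂ] l2 (PTuples P) := precompL _ (wmap_inj P)
def theQ : l2 (PTuples P) →L[ℂ] l2 (PTuples P) := (theJ P).comp (theK P)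
def theV : l2 (PTuples P) →L[ℂ] l2 (PTuples P) := (theJ P).comp (theW P)

lemma hKJ : (theK P).comp (theJ P) = ContinuousLinearMap.id ℂ _ :=
  precompL_comp_embedL _

lemma hQJ : (theQ P).comp (theJ P) = theJ P := by
  rw [theQ, ContinuousLinearMap.comp_assoc, hKJ, ContinuousLinearMap.comp_id]

lemma adjJ : ContinuousLinearMap.adjoint (theJ P) = theK P := adjoint_embedL _
lemma adjK : ContinuousLinearMap.adjoint (theK P) = theJ P := adjoint_precompL _
lemma adjW : ContinuousLinearMap.adjoint (theW P) = theW' P := adjoint_embedL _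

lemma hQstar : star (theQ P) = theQ P := by
  rw [ContinuousLinearMap.star_eq_adjoint, theQ, ContinuousLinearMap.adjoint_comp,
    adjJ, adjK]

lemma hVstar : star (theV P) = (theW' P).comp (theK P) := by
  rw [ContinuousLinearMap.star_eq_adjoint, theV, ContinuousLinearMap.adjoint_comp,
    adjJ, adjW]

variable {P}
variable (Lbar : P → (l2 (PTuples P) →L[ℂ] l2 (PTuples P)))
  (hLbar : ∀ (p : P) (x : PTuples P), Lbar p (ket x) = ket (pMul P p x))

include hLbar

lemma hQL (p : P) : (Lbar p).comp (theQ P) = (theQ P).comp (Lbar p) := by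
  apply ext_ket
  intro x
  simp only [ContinuousLinearMap.comp_apply, theQ]
  by_cases hx : x ∈ Set.range (jmap P)
  · obtain ⟨y, rfl⟩ := hx
    rw [show (theK P) (ket (jmap P y)) = ket y from precompL_ket_mem _ y,
      show (theJ P) (ket y) = ket (jmap P y) from embedL_ket _ y, hLbar, pMul_jmap,
      show (theK P) (ket (jmap P (pMul2 P p y))) = ket (pMul2 P p y) from precompL_ket_mem _ _,
      show (theJ P) (ket (pMul2 P p y)) = ket (jmap P (pMul2 P p y)) from embedL_ket _ _,
      ← pMul_jmap, ← hLbar]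
  · rw [show (theK P) (ket x) = 0 from precompL_ket_not_mem _ hx, hLbar,
      show (theK P) (ket (pMul P p x)) = 0 from
        precompL_ket_not_mem _ (fun h => hx ((pMul_mem_range_jmap P p x).mp h))]
    simp

lemma hVL (p : P) : (Lbar p).comp (theV P) = (theV P).comp (Lbar p) := by
  apply ext_ket
  intro x
  simp only [ContinuousLinearMap.comp_apply, theV]
  rw [show (theW P) (ket x) = ket (wmap P x) from embedL_ket _ x,
    show (theJ P) (ket (wmap P x)) = ket (jmap P (wmap P x)) from embedL_ket _ _, hLbar, hLbar,
    show (theW P) (ket (pMul P p x)) = ket (wmap P (pMul P p x)) from embedL_ket _ _,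
    show (theJ P) (ket (wmap P (pMul P p x))) = ket (jmap P (wmap P (pMul P p x))) from
      embedL_ket _ _]
  rfl

lemma hV'L (p : P) : ((theW' P).comp (theK P)).comp (Lbar p)
    = (Lbar p).comp ((theW' P).comp (theK P)) := by
  apply ext_ket
  intro x
  simp only [ContinuousLinearMap.comp_apply]
  by_cases hx : x ∈ Set.range (jmap P)
  · obtain ⟨y, rfl⟩ := hx
    rw [hLbar, pMul_jmap,
      show (theK P) (ket (jmap P (pMul2 P p y))) = ket (pMul2 P p y) from precompL_ket_mem _ _,
      show (theK P) (ket (jmap P y)) = ket y from precompL_ket_mem _ _]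
    by_cases hy : y ∈ Set.range (wmap P)
    · obtain ⟨z, rfl⟩ := hy
      rw [show pMul2 P p (wmap P z) = wmap P (pMul P p z) from rfl,
        show (theW' P) (ket (wmap P (pMul P p z))) = ket (pMul P p z) from precompL_ket_mem _ _,
        show (theW' P) (ket (wmap P z)) = ket z from precompL_ket_mem _ _, hLbar]
    · rw [show (theW' P) (ket (pMul2 P p y)) = 0 from
        precompL_ket_not_mem _ (fun h => hy (pMul2_mem_range_wmap P p y h)),
        show (theW' P) (ket y) = 0 from precompL_ket_not_mem _ hy, map_zero]
  · rw [hLbar,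
      show (theK P) (ket (pMul P p x)) = 0 from
        precompL_ket_not_mem _ (fun h => hx ((pMul_mem_range_jmap P p x).mp h)),
      show (theK P) (ket x) = 0 from precompL_ket_not_mem _ hx]
    simp

end Dbl

namespace Dbl
variable {G : Type*} [Group G] {P : Submonoid G}

lemma norm_theJ (f : l2 (PTuples2 P)) : ‖theJ P f‖ = ‖f‖ := norm_embedL _ _ f
lemma norm_theW (f : l2 (PTuples P)) : ‖theW P f‖ = ‖f‖ := norm_embedL _ _ f
lemma norm_theJ_le : ‖theJ P‖ ≤ 1 := norm_embedL_le _ _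
lemma norm_theK_le : ‖theK P‖ ≤ 1 := norm_precompL_le _ _

lemma theJ_ket (x : PTuples2 P) : theJ P (ket x) = ket (jmap P x) := embedL_ket _ _
lemma theK_ket (x : PTuples2 P) : theK P (ket (jmap P x)) = ket x := precompL_ket_mem _ _

lemma sandwich (b : l2 (PTuples P) →L[ℂ] l2 (PTuples P))
    (hb : b * theQ P = theQ P * b) :
    (theJ P).comp ((theK P).comp (b.comp (theJ P))) = b.comp (theJ P) := by
  calc (theJ P).comp ((theK P).comp (b.comp (theJ P)))
      = ((theJ P).comp (theK P)).comp (b.comp (theJ P)) :=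
        (ContinuousLinearMap.comp_assoc _ _ _).symm
    _ = ((theQ P).comp b).comp (theJ P) := by
        rw [show (theJ P).comp (theK P) = theQ P from rfl, ← ContinuousLinearMap.comp_assoc]
    _ = (b.comp (theQ P)).comp (theJ P) := by
        rw [← ContinuousLinearMap.mul_def (theQ P) b, ← ContinuousLinearMap.mul_def b (theQ P),
          hb]
    _ = b.comp (theJ P) := by rw [ContinuousLinearMap.comp_assoc, hQJ]

end Dbl


/-- **Proposition (doubling).**  Let `P` be a submonoid of a group `G` and let `L̄` be its
enhanced left regular representation, generating `𝒯̄_λ(P) ⊆ B(ℋ̄)`.  The map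
`L̄_p = ⊕_{n≥1} L_p^{⊗n} ↦ ⊕_{n≥2} L_p^{⊗n}` extends to an isometric unital
`*`-homomorphism of `𝒯̄_λ(P)`. -/
theorem enhanced_doubling (P : Submonoid G)
    (Lbar : P → (l2 (PTuples P) →L[ℂ] l2 (PTuples P)))
    (hLbar : ∀ (p : P) (x : PTuples P), Lbar p (ket x) = ket (pMul P p x))
    (M : P → (l2 (PTuples2 P) →L[ℂ] l2 (PTuples2 P)))
    (hM : ∀ (p : P) (x : PTuples2 P), M p (ket x) = ket (pMul2 P p x)) :
    ∃ ρ : (StarAlgebra.adjoin ℂ (Set.range Lbar)).topologicalClosure →⋆ₐ[ℂ]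
        (l2 (PTuples2 P) →L[ℂ] l2 (PTuples2 P)),
      (∀ (p : P) (h : Lbar p ∈ (StarAlgebra.adjoin ℂ (Set.range Lbar)).topologicalClosure),
        ρ ⟨Lbar p, h⟩ = M p) ∧
      (∀ a, ‖ρ a‖ = ‖(a : l2 (PTuples P) →L[ℂ] l2 (PTuples P))‖) := by
  classical
  let C : StarSubalgebra ℂ (l2 (PTuples P) →L[ℂ] l2 (PTuples P)) :=
  { carrier := {a | a * Dbl.theQ P = Dbl.theQ P * a ∧ a * Dbl.theV P = Dbl.theV P * a ∧
      star a * Dbl.theV P = Dbl.theV P * star a}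
    mul_mem' := fun {a b} ha hb => ⟨by rw [mul_assoc, hb.1, ← mul_assoc, ha.1, mul_assoc],
      by rw [mul_assoc, hb.2.1, ← mul_assoc, ha.2.1, mul_assoc],
      by rw [star_mul, mul_assoc, ha.2.2, ← mul_assoc, hb.2.2, mul_assoc]⟩
    one_mem' := ⟨by rw [one_mul, mul_one], by rw [one_mul, mul_one],
      by rw [star_one, one_mul, mul_one]⟩
    add_mem' := fun {a b} ha hb => ⟨by rw [add_mul, mul_add, ha.1, hb.1],
      by rw [add_mul, mul_add, ha.2.1, hb.2.1],
      by rw [star_add, add_mul, mul_add, ha.2.2, hb.2.2]⟩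
    zero_mem' := ⟨by rw [zero_mul, mul_zero], by rw [zero_mul, mul_zero],
      by rw [star_zero, zero_mul, mul_zero]⟩
    algebraMap_mem' := fun c => ⟨by
        rw [Algebra.algebraMap_eq_smul_one, smul_mul_assoc, one_mul, mul_smul_comm, mul_one],
      by rw [Algebra.algebraMap_eq_smul_one, smul_mul_assoc, one_mul, mul_smul_comm, mul_one],
      by rw [Algebra.algebraMap_eq_smul_one, star_smul, star_one, smul_mul_assoc, one_mul,
        mul_smul_comm, mul_one]⟩
    star_mem' := fun {a} ha => ⟨by
        have h4 := congrArg star ha.1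
        rw [star_mul, star_mul, Dbl.hQstar] at h4
        exact h4.symm,
      ha.2.2, by rw [star_star]; exact ha.2.1⟩ }
  have hC_closed : IsClosed (C : Set (l2 (PTuples P) →L[ℂ] l2 (PTuples P))) := by
    refine IsClosed.inter (isClosed_eq ?_ ?_) (IsClosed.inter (isClosed_eq ?_ ?_)
      (isClosed_eq ?_ ?_))
    · exact continuous_id.mul continuous_const
    · exact continuous_const.mul continuous_id
    · exact continuous_id.mul continuous_const
    · exact continuous_const.mul continuous_id
    · exact (continuous_star (R := l2 (PTuples P) →L[ℂ] l2 (PTuples P))).mul continuous_const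
    · exact continuous_const.mul (continuous_star (R := l2 (PTuples P) →L[ℂ] l2 (PTuples P)))
  have hgen : Set.range Lbar ⊆ (C : Set (l2 (PTuples P) →L[ℂ] l2 (PTuples P))) := by
    rintro _ ⟨p, rfl⟩
    refine ⟨?_, ?_, ?_⟩
    · rw [ContinuousLinearMap.mul_def, ContinuousLinearMap.mul_def]
      exact Dbl.hQL Lbar hLbar p
    · rw [ContinuousLinearMap.mul_def, ContinuousLinearMap.mul_def]
      exact Dbl.hVL Lbar hLbar p
    · have h5 : star (Dbl.theV P) * Lbar p = Lbar p * star (Dbl.theV P) := by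
        rw [Dbl.hVstar, ContinuousLinearMap.mul_def, ContinuousLinearMap.mul_def]
        exact Dbl.hV'L Lbar hLbar p
      have h6 := congrArg star h5
      rw [star_mul, star_mul, star_star] at h6
      exact h6
  have hsub : (StarAlgebra.adjoin ℂ (Set.range Lbar)).topologicalClosure ≤ C :=
    StarSubalgebra.topologicalClosure_minimal (StarAlgebra.adjoin_le hgen) hC_closed
  refine ⟨{ toFun := fun a =>
              (Dbl.theK P).comp (((a : l2 (PTuples P) →L[ℂ] l2 (PTuples P))).comp (Dbl.theJ P))
            map_one' := ?_
            map_mul' := ?_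
            map_zero' := ?_
            map_add' := ?_
            commutes' := ?_
            map_star' := ?_ }, ?_, ?_⟩
  · rw [OneMemClass.coe_one, ContinuousLinearMap.one_def, ContinuousLinearMap.id_comp,
      Dbl.hKJ, ← ContinuousLinearMap.one_def]
  · intro a b
    have hbQ : (b : l2 (PTuples P) →L[ℂ] l2 (PTuples P)) * Dbl.theQ P
        = Dbl.theQ P * (b : l2 (PTuples P) →L[ℂ] l2 (PTuples P)) := (hsub b.2).1
    rw [MulMemClass.coe_mul, ContinuousLinearMap.mul_def (a : l2 (PTuples P) →L[ℂ] l2 (PTuples P))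
        (b : l2 (PTuples P) →L[ℂ] l2 (PTuples P)),
      ContinuousLinearMap.mul_def
        ((Dbl.theK P).comp (((a : l2 (PTuples P) →L[ℂ] l2 (PTuples P))).comp (Dbl.theJ P)))
        ((Dbl.theK P).comp (((b : l2 (PTuples P) →L[ℂ] l2 (PTuples P))).comp (Dbl.theJ P))),
      ContinuousLinearMap.comp_assoc, ContinuousLinearMap.comp_assoc,
      ContinuousLinearMap.comp_assoc, Dbl.sandwich _ hbQ]
  · rw [ZeroMemClass.coe_zero, ContinuousLinearMap.zero_comp, ContinuousLinearMap.comp_zero]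
  · intro a b
    rw [AddMemClass.coe_add, ContinuousLinearMap.add_comp, ContinuousLinearMap.comp_add]
  · intro c
    rw [SubalgebraClass.coe_algebraMap, Algebra.algebraMap_eq_smul_one,
      Algebra.algebraMap_eq_smul_one, ContinuousLinearMap.smul_comp,
      ContinuousLinearMap.comp_smul, ContinuousLinearMap.one_def, ContinuousLinearMap.id_comp,
      Dbl.hKJ, ← ContinuousLinearMap.one_def]
  · intro a
    rw [StarMemClass.coe_star, ContinuousLinearMap.star_eq_adjoint,
      ContinuousLinearMap.star_eq_adjoint, ContinuousLinearMap.adjoint_comp,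
      ContinuousLinearMap.adjoint_comp, Dbl.adjK, Dbl.adjJ, ContinuousLinearMap.comp_assoc]
  · intro p h
    show (Dbl.theK P).comp ((Lbar p).comp (Dbl.theJ P)) = M p
    apply Dbl.ext_ket
    intro x
    simp only [ContinuousLinearMap.comp_apply]
    rw [Dbl.theJ_ket, hLbar, Dbl.pMul_jmap, Dbl.theK_ket, hM]
  · intro a
    show ‖(Dbl.theK P).comp (((a : l2 (PTuples P) →L[ℂ] l2 (PTuples P))).comp (Dbl.theJ P))‖
        = ‖(a : l2 (PTuples P) →L[ℂ] l2 (PTuples P))‖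
    obtain ⟨haQ, haV, -⟩ := hsub a.2
    apply le_antisymm
    · calc ‖(Dbl.theK P).comp (((a : l2 (PTuples P) →L[ℂ] l2 (PTuples P))).comp (Dbl.theJ P))‖
          ≤ ‖Dbl.theK P‖ * ‖((a : l2 (PTuples P) →L[ℂ] l2 (PTuples P))).comp (Dbl.theJ P)‖ :=
            ContinuousLinearMap.opNorm_comp_le _ _
        _ ≤ ‖Dbl.theK P‖ * (‖(a : l2 (PTuples P) →L[ℂ] l2 (PTuples P))‖ * ‖Dbl.theJ P‖) :=
            mul_le_mul_of_nonneg_left (ContinuousLinearMap.opNorm_comp_le _ _) (norm_nonneg _)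
        _ ≤ 1 * (‖(a : l2 (PTuples P) →L[ℂ] l2 (PTuples P))‖ * 1) := by
            gcongr
            · exact Dbl.norm_theK_le
            · exact Dbl.norm_theJ_le
        _ = ‖(a : l2 (PTuples P) →L[ℂ] l2 (PTuples P))‖ := by ring
    · refine ContinuousLinearMap.opNorm_le_bound _ (norm_nonneg _) (fun ξ => ?_)
      have h1 : (a : l2 (PTuples P) →L[ℂ] l2 (PTuples P)) ((Dbl.theV P) ξ)
          = (Dbl.theV P) ((a : l2 (PTuples P) →L[ℂ] l2 (PTuples P)) ξ) := by
        have h0 := DFunLike.congr_fun haV ξ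
        rw [ContinuousLinearMap.mul_apply, ContinuousLinearMap.mul_apply] at h0
        exact h0
      have h2 : ((a : l2 (PTuples P) →L[ℂ] l2 (PTuples P))).comp (Dbl.theJ P)
          = (Dbl.theJ P).comp ((Dbl.theK P).comp
            (((a : l2 (PTuples P) →L[ℂ] l2 (PTuples P))).comp (Dbl.theJ P))) :=
        (Dbl.sandwich _ haQ).symm
      calc ‖(a : l2 (PTuples P) →L[ℂ] l2 (PTuples P)) ξ‖
          = ‖(Dbl.theV P) ((a : l2 (PTuples P) →L[ℂ] l2 (PTuples P)) ξ)‖ := by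
            rw [show (Dbl.theV P) ((a : l2 (PTuples P) →L[ℂ] l2 (PTuples P)) ξ)
                = (Dbl.theJ P) ((Dbl.theW P) ((a : l2 (PTuples P) →L[ℂ] l2 (PTuples P)) ξ))
                from rfl, Dbl.norm_theJ, Dbl.norm_theW]
        _ = ‖(a : l2 (PTuples P) →L[ℂ] l2 (PTuples P)) ((Dbl.theJ P) ((Dbl.theW P) ξ))‖ := by
            rw [← h1]
            rfl
        _ = ‖((Dbl.theK P).comp
              (((a : l2 (PTuples P) →L[ℂ] l2 (PTuples P))).comp (Dbl.theJ P)))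
              ((Dbl.theW P) ξ)‖ := by
            have h3 := DFunLike.congr_fun h2 ((Dbl.theW P) ξ)
            simp only [ContinuousLinearMap.comp_apply] at h3
            rw [h3, Dbl.norm_theJ]
            rfl
        _ ≤ ‖(Dbl.theK P).comp
              (((a : l2 (PTuples P) →L[ℂ] l2 (PTuples P))).comp (Dbl.theJ P))‖
              * ‖(Dbl.theW P) ξ‖ :=
            ContinuousLinearMap.le_opNorm _ _
        _ = ‖(Dbl.theK P).comp
              (((a : l2 (PTuples P) →L[ℂ] l2 (PTuples P))).comp (Dbl.theJ P))‖ * ‖ξ‖ := by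
            rw [Dbl.norm_theW]

end
end

section
/- Let P be a submonoid of a (discrete) group G. The map L̄_p ↦ L̄_p ⊗ L̄_p (p ∈ P) extends to a *-isomorphism from 𝒯̄_λ(P) onto the C*-algebra generated by {L̄_p ⊗ L̄_p : p ∈ P} in B(ℋ̄ ⊗ ℋ̄); that is, there is an isometric unital star-algebra homomorphism φ on 𝒯̄_λ(P) with φ(L̄_p) = L̄_p ⊗ L̄_p for all p ∈ P, whose range is the C*-algebra generated by these tensors. -/
noncomputable section
set_option synthInstance.maxHeartbeats 1000000
set_option maxHeartbeats 1000000
set_option linter.unusedVariables false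

open scoped ENNReal

variable {G : Type*} [Group G]

namespace SelfAbsorbAux

open Function ContinuousLinearMap

local notation "⟪" x ", " y "⟫" => @inner ℂ _ _ x y

variable {ι κ : Type*}

lemma ket_apply_self (i : ι) : (ket i : l2 ι) i = 1 := by
  letI := Classical.decEq ι
  simp only [ket]
  exact lp.single_apply_self _ _ _

lemma ket_apply_ne {i j : ι} (h : j ≠ i) : (ket i : l2 ι) j = 0 := by
  letI := Classical.decEq ι
  simp only [ket]
  exact lp.single_apply_ne _ _ _ h

lemma ket_eq_single [DecidableEq ι] (i : ι) : (ket i : l2 ι) = lp.single 2 i 1 := by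
  apply lp.ext; funext j
  by_cases h : j = i
  · subst h; rw [ket_apply_self, lp.single_apply_self]
  · rw [ket_apply_ne h, lp.single_apply_ne _ _ _ h]

lemma inner_ket_left (i : ι) (x : l2 ι) : ⟪(ket i : l2 ι), x⟫ = x i := by
  classical
  rw [ket_eq_single]
  simpa using lp.inner_single_left (𝕜 := ℂ) i (1 : ℂ) x

lemma single_eq_smul_ket [DecidableEq ι] (i : ι) (c : ℂ) :
    (lp.single 2 i c : l2 ι) = c • (ket i : l2 ι) := by
  apply lp.ext; funext j
  rw [lp.coeFn_smul, Pi.smul_apply, smul_eq_mul]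
  by_cases h : j = i
  · subst h; rw [lp.single_apply_self, ket_apply_self, mul_one]
  · rw [lp.single_apply_ne _ _ _ h, ket_apply_ne h, mul_zero]

lemma clm_ext_ket {H : Type*} [NormedAddCommGroup H] [NormedSpace ℂ H]
    {A B : l2 ι →L[ℂ] H} (h : ∀ i, A (ket i) = B (ket i)) : A = B := by
  classical
  ext u
  have hu := lp.hasSum_single (E := fun _ : ι => ℂ) (p := 2) (by norm_num) u
  have hA := hu.mapL A
  have hB := hu.mapL B
  have he : (fun i => A (lp.single 2 i (u i))) = fun i => B (lp.single 2 i (u i)) := by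
    funext i
    rw [single_eq_smul_ket, map_smul, map_smul, h]
  exact hA.unique (he ▸ hB)


section Embed

variable (f : ι → κ)

lemma memℓp_extend (hf : Function.Injective f) (u : l2 ι) :
    Memℓp (Function.extend f (⇑u) 0) 2 := by
  apply memℓp_gen
  have hs : Summable (fun i => ‖u i‖ ^ (2 : ℝ≥0∞).toReal) :=
    (lp.memℓp u).summable (by norm_num)
  have he : (fun b => ‖Function.extend f (⇑u) 0 b‖ ^ (2 : ℝ≥0∞).toReal)
      = Function.extend f (fun i => ‖u i‖ ^ (2 : ℝ≥0∞).toReal) 0 := by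
    funext b
    by_cases h : ∃ a, f a = b
    · obtain ⟨a, rfl⟩ := h
      rw [hf.extend_apply, hf.extend_apply]
    · rw [Function.extend_apply' _ _ _ h, Function.extend_apply' _ _ _ h]
      simp only [Pi.zero_apply, norm_zero]
      rw [Real.zero_rpow (by norm_num)]
  rw [he]
  exact (summable_extend_zero hf).2 hs

/-- Extension by zero along a map, as a bare function `ℓ²(ι) → ℓ²(κ)`. -/
def embFun (hf : Function.Injective f) (u : l2 ι) : l2 κ :=
  ⟨Function.extend f (⇑u) 0, memℓp_extend f hf u⟩

lemma embFun_coe (hf : Function.Injective f) (u : l2 ι) :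
    ⇑(embFun f hf u) = Function.extend f (⇑u) 0 := rfl

/-- Extension by zero, as a linear map. -/
def embLinear (hf : Function.Injective f) : l2 ι →ₗ[ℂ] l2 κ where
  toFun := embFun f hf
  map_add' := by
    intro u v
    apply lp.ext
    rw [lp.coeFn_add (embFun f hf u) (embFun f hf v), embFun_coe, embFun_coe, embFun_coe,
      lp.coeFn_add u v]
    funext b
    rw [Pi.add_apply]
    by_cases h : ∃ a, f a = b
    · obtain ⟨a, rfl⟩ := h
      rw [hf.extend_apply, hf.extend_apply, hf.extend_apply, Pi.add_apply]
    · rw [Function.extend_apply' _ _ _ h, Function.extend_apply' _ _ _ h,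
        Function.extend_apply' _ _ _ h]
      simp
  map_smul' := by
    intro c u
    apply lp.ext
    rw [RingHom.id_apply, lp.coeFn_smul c (embFun f hf u), embFun_coe, embFun_coe,
      lp.coeFn_smul c u]
    funext b
    rw [Pi.smul_apply]
    by_cases h : ∃ a, f a = b
    · obtain ⟨a, rfl⟩ := h
      rw [hf.extend_apply, hf.extend_apply, Pi.smul_apply]
    · rw [Function.extend_apply' _ _ _ h, Function.extend_apply' _ _ _ h]
      simp

lemma embLinear_norm (hf : Function.Injective f) (u : l2 ι) :
    ‖embLinear f hf u‖ = ‖u‖ := by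
  show ‖embFun f hf u‖ = ‖u‖
  have h2 : (0:ℝ) < (2 : ℝ≥0∞).toReal := by norm_num
  rw [lp.norm_eq_tsum_rpow h2, lp.norm_eq_tsum_rpow h2]
  congr 1
  show ∑' (b : κ), ‖(embFun f hf u) b‖ ^ (2 : ℝ≥0∞).toReal
      = ∑' (a : ι), ‖u a‖ ^ (2 : ℝ≥0∞).toReal
  rw [embFun_coe]
  have hsupp : Function.support
      (fun b => ‖Function.extend f (⇑u) 0 b‖ ^ (2 : ℝ≥0∞).toReal) ⊆ Set.range f := by
    intro b hb
    by_contra hbr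
    apply hb
    show ‖Function.extend f (⇑u) 0 b‖ ^ (2 : ℝ≥0∞).toReal = 0
    rw [Function.extend_apply' _ _ _ (fun ⟨a, ha⟩ => hbr ⟨a, ha⟩)]
    simp only [Pi.zero_apply, norm_zero]
    rw [Real.zero_rpow (by norm_num)]
  rw [← hf.tsum_eq hsupp]
  congr 1
  funext a
  rw [hf.extend_apply]

/-- Extension by zero along an injective map, as a linear isometry `ℓ²(ι) → ℓ²(κ)`. -/
def embed (hf : Function.Injective f) : l2 ι →ₗᵢ[ℂ] l2 κ :=
  ⟨embLinear f hf, embLinear_norm f hf⟩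

/-- The associated continuous linear map. -/
def emb (hf : Function.Injective f) : l2 ι →L[ℂ] l2 κ := (embed f hf).toContinuousLinearMap

variable (hf : Function.Injective f)

lemma emb_apply (u : l2 ι) (b : κ) : (emb f hf u) b = Function.extend f (⇑u) 0 b := rfl

lemma emb_ket (a : ι) : emb f hf (ket a) = ket (f a) := by
  apply lp.ext; funext b
  rw [emb_apply]
  by_cases h : ∃ a', f a' = b
  · obtain ⟨a', rfl⟩ := h
    rw [hf.extend_apply]
    by_cases h2 : a' = a
    · subst h2; rw [ket_apply_self, ket_apply_self]
    · rw [ket_apply_ne h2, ket_apply_ne (fun hh => h2 (hf hh))]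
  · rw [Function.extend_apply' _ _ _ h,
      ket_apply_ne (fun hh : b = f a => h ⟨a, hh.symm⟩)]
    rfl

lemma adjoint_emb_comp_self :
    adjoint (emb f hf) ∘L emb f hf = (1 : l2 ι →L[ℂ] l2 ι) :=
  (norm_map_iff_adjoint_comp_self (emb f hf)).1 (embed f hf).norm_map

lemma norm_emb_le : ‖emb f hf‖ ≤ 1 := (embed f hf).norm_toContinuousLinearMap_le

lemma norm_adjoint_emb_le : ‖adjoint (emb f hf)‖ ≤ 1 := by
  rw [show ‖adjoint (emb f hf)‖ = ‖emb f hf‖ from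
    LinearIsometryEquiv.norm_map ContinuousLinearMap.adjoint (emb f hf)]
  exact norm_emb_le f hf

lemma intertwine (μ : ι → ι) (ν : κ → κ) (hcomm : ∀ a, f (μ a) = ν (f a))
    (A : l2 κ →L[ℂ] l2 κ) (B : l2 ι →L[ℂ] l2 ι)
    (hA : ∀ b, A (ket b) = ket (ν b)) (hB : ∀ a, B (ket a) = ket (μ a)) :
    A ∘L emb f hf = emb f hf ∘L B := by
  apply clm_ext_ket
  intro a
  rw [ContinuousLinearMap.comp_apply, ContinuousLinearMap.comp_apply,
    emb_ket, hA, hB, emb_ket, hcomm]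

lemma intertwine_star (μ : ι → ι) (ν : κ → κ) (hcomm : ∀ a, f (μ a) = ν (f a))
    (A : l2 κ →L[ℂ] l2 κ) (B : l2 ι →L[ℂ] l2 ι)
    (hA : ∀ b, A (ket b) = ket (ν b)) (hB : ∀ a, B (ket a) = ket (μ a))
    (hdiv : ∀ b, (∃ a, ν b = f a) → ∃ a, b = f a) :
    adjoint A ∘L emb f hf = emb f hf ∘L adjoint B := by
  apply clm_ext_ket
  intro w
  rw [ContinuousLinearMap.comp_apply, ContinuousLinearMap.comp_apply]
  apply lp.ext; funext b
  have hL : (adjoint A (emb f hf (ket w))) b = (ket (f w) : l2 κ) (ν b) := by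
    rw [emb_ket, ← inner_ket_left b, adjoint_inner_right, hA, inner_ket_left]
  rw [hL, emb_apply]
  by_cases hb : ∃ a, f a = b
  · obtain ⟨a, rfl⟩ := hb
    rw [hf.extend_apply]
    have hR : (adjoint B (ket w)) a = (ket w : l2 ι) (μ a) := by
      rw [← inner_ket_left a, adjoint_inner_right, hB, inner_ket_left]
    rw [hR, ← hcomm]
    by_cases h2 : μ a = w
    · rw [h2, ket_apply_self, ket_apply_self]
    · rw [ket_apply_ne (fun hh : f (μ a) = f w => h2 (hf hh)),
        ket_apply_ne (fun hh : μ a = w => h2 hh)]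
  · rw [Function.extend_apply' _ _ _ hb]
    have hne : ν b ≠ f w := fun hh => hb ((hdiv b ⟨w, hh⟩).imp (fun a ha => ha.symm))
    rw [ket_apply_ne hne]
    rfl
end Embed


section Tuples

variable (P : Submonoid G)

/-- Cancellation in a submonoid of a group. -/
lemma pcancel {p a b : P} (h : p * a = p * b) : a = b := by
  apply Subtype.ext
  have h' : (p : G) * (a : G) = (p : G) * (b : G) := by
    have := congrArg (Subtype.val) h
    simpa using this
  exact mul_left_cancel h'

lemma pMul_injective (p : P) : Function.Injective (pMul P p) := by
  rintro ⟨n, x⟩ ⟨m, y⟩ h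
  have h1 : n = m := congrArg Sigma.fst h
  subst h1
  have h2 : HEq (pMul P p ⟨n, x⟩).2 (pMul P p ⟨n, y⟩).2 := by rw [h]
  have h2' : (fun i : Fin (n + 1) => p * x i) = (fun i : Fin (n + 1) => p * y i) :=
    heq_iff_eq.mp h2
  congr 1
  funext i
  exact pcancel P (congrFun h2' i)

/-- The diagonal embedding `X → X × X`. -/
def diagMap (x : PTuples P) : PTuples P × PTuples P := (x, x)

lemma diagMap_injective : Function.Injective (diagMap P) := fun x y h =>
  congrArg Prod.fst h

/-- The coordinatewise action on pairs. -/
def pMul2 (p : P) (z : PTuples P × PTuples P) : PTuples P × PTuples P :=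
  (pMul P p z.1, pMul P p z.2)

lemma diag_comm (p : P) (x : PTuples P) :
    diagMap P (pMul P p x) = pMul2 P p (diagMap P x) := rfl

lemma diag_div (p : P) (z : PTuples P × PTuples P)
    (h : ∃ x, pMul2 P p z = diagMap P x) : ∃ x, z = diagMap P x := by
  obtain ⟨x, hx⟩ := h
  have h1 : pMul P p z.1 = x := congrArg Prod.fst hx
  have h2 : pMul P p z.2 = x := congrArg Prod.snd hx
  refine ⟨z.1, ?_⟩
  have h3 : z.1 = z.2 := pMul_injective P p (h1.trans h2.symm)
  show z = (z.1, z.1)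
  rw [Prod.ext_iff]
  exact ⟨rfl, h3.symm⟩

/-- An injective equivariant "concatenation" map `X × X → X`; the length of the
target tuple encodes the pair of lengths of the sources via `Nat.pair`, and the tail is
padded with the first coordinate of the first tuple. -/
def catMap (z : PTuples P × PTuples P) : PTuples P :=
  ⟨Nat.pair z.1.1 z.2.1 + 1, fun i =>
    if h : (i : ℕ) < z.1.1 + 1 then z.1.2 ⟨(i : ℕ), h⟩
    else if h2 : (i : ℕ) < z.1.1 + 1 + (z.2.1 + 1) then
      z.2.2 ⟨(i : ℕ) - (z.1.1 + 1), by omega⟩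
    else z.1.2 0⟩

lemma catMap_val (m n : ℕ) (x : Fin (m + 1) → P) (y : Fin (n + 1) → P)
    (k : ℕ) (hk : k < Nat.pair m n + 1 + 1) :
    (catMap P (⟨m, x⟩, ⟨n, y⟩)).2 ⟨k, hk⟩ =
      if h : k < m + 1 then x ⟨k, h⟩
      else if h2 : k < m + 1 + (n + 1) then y ⟨k - (m + 1), by omega⟩
      else x 0 := rfl

lemma catMap_injective : Function.Injective (catMap P) := by
  rintro ⟨⟨m, x⟩, ⟨n, y⟩⟩ ⟨⟨m', x'⟩, ⟨n', y'⟩⟩ h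
  have hfst : Nat.pair m n + 1 = Nat.pair m' n' + 1 := congrArg Sigma.fst h
  have hmn : m = m' ∧ n = n' := Nat.pair_eq_pair.mp (by omega)
  obtain ⟨rfl, rfl⟩ := hmn
  have h2 : HEq (catMap P (⟨m, x⟩, ⟨n, y⟩)).2 (catMap P (⟨m, x'⟩, ⟨n, y'⟩)).2 := by rw [h]
  have h2' : (catMap P (⟨m, x⟩, ⟨n, y⟩)).2 = (catMap P (⟨m, x'⟩, ⟨n, y'⟩)).2 :=
    heq_iff_eq.mp h2
  have hpair := Nat.add_le_pair m n
  have hx : x = x' := by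
    funext i
    have hilt := i.isLt
    have hi : (i : ℕ) < Nat.pair m n + 1 + 1 := by omega
    have e := congrFun h2' ⟨(i : ℕ), hi⟩
    erw [catMap_val, catMap_val, dif_pos (show (i : ℕ) < m + 1 from hilt),
      dif_pos (show (i : ℕ) < m + 1 from hilt)] at e
    exact (congrArg x (Fin.ext rfl)).trans (e.trans (congrArg x' (Fin.ext rfl)))
  have hy : y = y' := by
    funext j
    have hjlt := j.isLt
    have hi : m + 1 + (j : ℕ) < Nat.pair m n + 1 + 1 := by omega
    have e := congrFun h2' ⟨m + 1 + (j : ℕ), hi⟩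
    erw [catMap_val, catMap_val, dif_neg (show ¬ m + 1 + (j : ℕ) < m + 1 by omega),
      dif_neg (show ¬ m + 1 + (j : ℕ) < m + 1 by omega),
      dif_pos (show m + 1 + (j : ℕ) < m + 1 + (n + 1) by omega),
      dif_pos (show m + 1 + (j : ℕ) < m + 1 + (n + 1) by omega)] at e
    exact (congrArg y (Fin.ext (by show (j : ℕ) = m + 1 + (j : ℕ) - (m + 1); omega))).trans
      (e.trans (congrArg y' (Fin.ext (by show m + 1 + (j : ℕ) - (m + 1) = (j : ℕ); omega))))
  rw [hx, hy]

lemma cat_comm (p : P) (z : PTuples P × PTuples P) :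
    catMap P (pMul2 P p z) = pMul P p (catMap P z) := by
  obtain ⟨⟨m, x⟩, ⟨n, y⟩⟩ := z
  apply Sigma.ext
  · rfl
  · apply heq_of_eq
    funext k
    obtain ⟨kv, hk⟩ := k
    show (catMap P (⟨m, fun i => p * x i⟩, ⟨n, fun i => p * y i⟩)).2 ⟨kv, hk⟩
      = p * (catMap P (⟨m, x⟩, ⟨n, y⟩)).2 ⟨kv, hk⟩
    erw [catMap_val, catMap_val]
    by_cases h1 : kv < m + 1
    · rw [dif_pos h1, dif_pos h1]
    · by_cases h2 : kv < m + 1 + (n + 1)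
      · rw [dif_neg h1, dif_neg h1, dif_pos h2, dif_pos h2]
      · rw [dif_neg h1, dif_neg h1, dif_neg h2, dif_neg h2]

lemma cat_div (p : P) (b : PTuples P)
    (h : ∃ z, pMul P p b = catMap P z) : ∃ v, b = catMap P v := by
  obtain ⟨⟨⟨m, x⟩, ⟨n, y⟩⟩, hz⟩ := h
  obtain ⟨N, g⟩ := b
  have hfst : N = Nat.pair m n + 1 := congrArg Sigma.fst hz
  subst hfst
  have hpair := Nat.add_le_pair m n
  have h2 : HEq (pMul P p ⟨Nat.pair m n + 1, g⟩).2 (catMap P (⟨m, x⟩, ⟨n, y⟩)).2 := by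
    rw [hz]
  have h2' : (fun i : Fin (Nat.pair m n + 1 + 1) => p * g i)
      = (catMap P (⟨m, x⟩, ⟨n, y⟩)).2 := heq_iff_eq.mp h2
  refine ⟨(⟨m, fun i => g ⟨(i : ℕ), by have := i.isLt; omega⟩⟩,
          ⟨n, fun j => g ⟨m + 1 + (j : ℕ), by have := j.isLt; omega⟩⟩), ?_⟩
  apply Sigma.ext
  · rfl
  · apply heq_of_eq
    funext k
    obtain ⟨kv, hk⟩ := k
    show g ⟨kv, hk⟩ = _
    erw [catMap_val]
    by_cases hk1 : kv < m + 1
    · rw [dif_pos hk1] <;> exact congrArg g (Fin.ext rfl)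
    · by_cases hk2 : kv < m + 1 + (n + 1)
      · rw [dif_neg hk1, dif_pos hk2] <;>
          exact congrArg g (Fin.ext (by show kv = m + 1 + (kv - (m + 1)); omega))
      · rw [dif_neg hk1, dif_neg hk2]
        have hi0 : (0 : ℕ) < Nat.pair m n + 1 + 1 := by omega
        have e1 := congrFun h2' ⟨kv, hk⟩
        erw [catMap_val, dif_neg hk1, dif_neg hk2] at e1
        have e2 := congrFun h2' ⟨0, hi0⟩
        erw [catMap_val, dif_pos (show (0 : ℕ) < m + 1 by omega)] at e2
        have e2' : p * g ⟨0, hi0⟩ = x 0 :=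
          e2.trans (congrArg x (Fin.ext (by simp)))
        have hgg : g ⟨kv, hk⟩ = g ⟨0, hi0⟩ := pcancel P (e1.trans e2'.symm)
        exact hgg.trans (congrArg g (Fin.ext (by simp)))

end Tuples


section Press

variable {ι κ : Type*} (f : ι → κ) (hf : Function.Injective f)

open ContinuousLinearMap

/-- Compression of an operator on `ℓ²(κ)` to `ℓ²(ι)` along the isometry `emb f hf`. -/
def press (T : l2 κ →L[ℂ] l2 κ) : l2 ι →L[ℂ] l2 ι :=
  adjoint (emb f hf) ∘L (T ∘L emb f hf)

lemma press_apply (T : l2 κ →L[ℂ] l2 κ) (u : l2 ι) :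
    press f hf T u = adjoint (emb f hf) (T (emb f hf u)) := rfl

lemma emb_adjoint_emb (u : l2 ι) : adjoint (emb f hf) (emb f hf u) = u := by
  have := ContinuousLinearMap.ext_iff.mp (adjoint_emb_comp_self f hf) u
  rwa [ContinuousLinearMap.comp_apply, ContinuousLinearMap.one_apply] at this

lemma press_of_intertwine {T : l2 κ →L[ℂ] l2 κ} {S : l2 ι →L[ℂ] l2 ι}
    (h : T ∘L emb f hf = emb f hf ∘L S) : press f hf T = S := by
  ext u
  have hv := ContinuousLinearMap.ext_iff.mp h u
  rw [ContinuousLinearMap.comp_apply, ContinuousLinearMap.comp_apply] at hv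
  rw [press_apply, hv, emb_adjoint_emb]

lemma press_one : press f hf (1 : l2 κ →L[ℂ] l2 κ) = 1 := by
  ext u
  rw [press_apply, ContinuousLinearMap.one_apply, ContinuousLinearMap.one_apply,
    emb_adjoint_emb]

lemma press_star (T : l2 κ →L[ℂ] l2 κ) :
    press f hf (star T) = star (press f hf T) := by
  show adjoint (emb f hf) ∘L (star T ∘L emb f hf)
      = star (adjoint (emb f hf) ∘L (T ∘L emb f hf))
  rw [star_eq_adjoint, star_eq_adjoint, adjoint_comp, adjoint_comp, adjoint_adjoint]
  rfl

lemma press_add (T₁ T₂ : l2 κ →L[ℂ] l2 κ) :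
    press f hf (T₁ + T₂) = press f hf T₁ + press f hf T₂ := by
  ext u
  simp [press_apply]

lemma press_smul (c : ℂ) (T : l2 κ →L[ℂ] l2 κ) :
    press f hf (c • T) = c • press f hf T := by
  ext u
  simp [press_apply]

lemma press_zero : press f hf (0 : l2 κ →L[ℂ] l2 κ) = 0 := by
  ext u
  simp [press_apply]

lemma press_mul (T₁ T₂ : l2 κ →L[ℂ] l2 κ)
    (h : T₂ ∘L emb f hf = emb f hf ∘L press f hf T₂) :
    press f hf (T₁ * T₂) = press f hf T₁ * press f hf T₂ := by
  ext u
  have h2 := ContinuousLinearMap.ext_iff.mp h u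
  rw [ContinuousLinearMap.comp_apply, ContinuousLinearMap.comp_apply] at h2
  rw [ContinuousLinearMap.mul_apply, press_apply, press_apply,
    ContinuousLinearMap.mul_apply, h2]

lemma press_norm_le (T : l2 κ →L[ℂ] l2 κ) : ‖press f hf T‖ ≤ ‖T‖ := by
  have h1 := norm_adjoint_emb_le f hf
  have h2 := norm_emb_le f hf
  have h3 : ‖press f hf T‖ ≤ ‖adjoint (emb f hf)‖ * ‖T ∘L emb f hf‖ :=
    ContinuousLinearMap.opNorm_comp_le _ _
  have h4 : ‖T ∘L emb f hf‖ ≤ ‖T‖ * ‖emb f hf‖ :=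
    ContinuousLinearMap.opNorm_comp_le _ _
  have h5 := norm_nonneg (T ∘L emb f hf)
  have h6 := norm_nonneg T
  have h7 := norm_nonneg (adjoint (emb f hf))
  nlinarith

lemma press_continuous : Continuous (press f hf) := by
  have : Continuous fun T : l2 κ →L[ℂ] l2 κ => T ∘L emb f hf :=
    continuous_id.clm_comp continuous_const
  exact continuous_const.clm_comp this

end Press


section Main

open ContinuousLinearMap

variable (P : Submonoid G)
variable (Lbar : P → (l2 (PTuples P) →L[ℂ] l2 (PTuples P)))
variable (LL : P → (l2 (PTuples P × PTuples P) →L[ℂ] l2 (PTuples P × PTuples P)))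

/-- The compression `B(ℓ²(X)) → B(ℓ²(X×X))` along the concatenation isometry. -/
def PhiP : (l2 (PTuples P) →L[ℂ] l2 (PTuples P)) →
    (l2 (PTuples P × PTuples P) →L[ℂ] l2 (PTuples P × PTuples P)) :=
  press (catMap P) (catMap_injective P)

/-- The compression `B(ℓ²(X×X)) → B(ℓ²(X))` along the diagonal isometry. -/
def PsiP : (l2 (PTuples P × PTuples P) →L[ℂ] l2 (PTuples P × PTuples P)) →
    (l2 (PTuples P) →L[ℂ] l2 (PTuples P)) :=
  press (diagMap P) (diagMap_injective P)

/-- The conditions defining the closed star-subalgebra on which the compression behaves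
multiplicatively, intertwines the two isometries, and lands in the target C*-algebra. -/
def Scond (a : l2 (PTuples P) →L[ℂ] l2 (PTuples P)) : Prop :=
  (a ∘L emb (catMap P) (catMap_injective P)
      = emb (catMap P) (catMap_injective P) ∘L PhiP P a)
  ∧ (PhiP P a ∘L emb (diagMap P) (diagMap_injective P)
      = emb (diagMap P) (diagMap_injective P) ∘L a)
  ∧ PhiP P a ∈ (StarAlgebra.adjoin ℂ (Set.range LL)).topologicalClosure

lemma Scond_one : Scond P LL 1 := by
  refine ⟨?_, ?_, ?_⟩
  · rw [show PhiP P 1 = 1 from press_one _ _]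
    ext u
    simp
  · rw [show PhiP P 1 = 1 from press_one _ _]
    ext u
    simp
  · rw [show PhiP P 1 = 1 from press_one _ _]
    exact one_mem _

lemma Scond_mul {a b : l2 (PTuples P) →L[ℂ] l2 (PTuples P)}
    (ha : Scond P LL a) (hb : Scond P LL b) : Scond P LL (a * b) := by
  have hmul : PhiP P (a * b) = PhiP P a * PhiP P b := press_mul _ _ a b hb.1
  refine ⟨?_, ?_, ?_⟩
  · rw [hmul]
    ext u
    have hb1 := ContinuousLinearMap.ext_iff.mp hb.1 u
    rw [ContinuousLinearMap.comp_apply, ContinuousLinearMap.comp_apply] at hb1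
    have ha1 := ContinuousLinearMap.ext_iff.mp ha.1 (PhiP P b u)
    rw [ContinuousLinearMap.comp_apply, ContinuousLinearMap.comp_apply] at ha1
    rw [ContinuousLinearMap.comp_apply, ContinuousLinearMap.comp_apply,
      ContinuousLinearMap.mul_apply, hb1, ha1, ContinuousLinearMap.mul_apply]
  · rw [hmul]
    ext u
    have hb2 := ContinuousLinearMap.ext_iff.mp hb.2.1 u
    rw [ContinuousLinearMap.comp_apply, ContinuousLinearMap.comp_apply] at hb2
    have ha2 := ContinuousLinearMap.ext_iff.mp ha.2.1 (b u)
    rw [ContinuousLinearMap.comp_apply, ContinuousLinearMap.comp_apply] at ha2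
    rw [ContinuousLinearMap.comp_apply, ContinuousLinearMap.comp_apply,
      ContinuousLinearMap.mul_apply, hb2, ha2, ContinuousLinearMap.mul_apply]
  · rw [hmul]
    exact mul_mem ha.2.2 hb.2.2

lemma Scond_add {a b : l2 (PTuples P) →L[ℂ] l2 (PTuples P)}
    (ha : Scond P LL a) (hb : Scond P LL b) : Scond P LL (a + b) := by
  have hadd : PhiP P (a + b) = PhiP P a + PhiP P b := press_add _ _ a b
  refine ⟨?_, ?_, ?_⟩
  · rw [hadd, add_comp, comp_add, ha.1, hb.1]
  · rw [hadd, add_comp, comp_add, ha.2.1, hb.2.1]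
  · rw [hadd]
    exact add_mem ha.2.2 hb.2.2

lemma Scond_smul (c : ℂ) {a : l2 (PTuples P) →L[ℂ] l2 (PTuples P)}
    (ha : Scond P LL a) : Scond P LL (c • a) := by
  have hsmul : PhiP P (c • a) = c • PhiP P a := press_smul _ _ c a
  refine ⟨?_, ?_, ?_⟩
  · rw [hsmul, smul_comp, comp_smul, ha.1]
  · rw [hsmul, smul_comp, comp_smul, ha.2.1]
  · rw [hsmul]
    exact SMulMemClass.smul_mem c ha.2.2

/-- The closed star-subalgebra of "good" elements. -/
def Ssub : StarSubalgebra ℂ (l2 (PTuples P) →L[ℂ] l2 (PTuples P)) where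
  carrier := {a | Scond P LL a ∧ Scond P LL (star a)}
  mul_mem' := fun {a b} ha hb => by
    refine ⟨Scond_mul P LL ha.1 hb.1, ?_⟩
    rw [star_mul]
    exact Scond_mul P LL hb.2 ha.2
  one_mem' := by
    refine ⟨Scond_one P LL, ?_⟩
    rw [star_one]
    exact Scond_one P LL
  add_mem' := fun {a b} ha hb => by
    refine ⟨Scond_add P LL ha.1 hb.1, ?_⟩
    rw [star_add]
    exact Scond_add P LL ha.2 hb.2
  zero_mem' := by
    have h0 : (0 : l2 (PTuples P) →L[ℂ] l2 (PTuples P)) = (0 : ℂ) • 1 := by simp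
    rw [h0]
    refine ⟨Scond_smul P LL 0 (Scond_one P LL), ?_⟩
    rw [star_smul, star_one]
    exact Scond_smul P LL _ (Scond_one P LL)
  algebraMap_mem' := fun c => by
    rw [Algebra.algebraMap_eq_smul_one]
    refine ⟨Scond_smul P LL c (Scond_one P LL), ?_⟩
    rw [star_smul, star_one]
    exact Scond_smul P LL _ (Scond_one P LL)
  star_mem' := fun {a} ha => by
    refine ⟨ha.2, ?_⟩
    rw [star_star]
    exact ha.1

lemma isClosed_Scond : IsClosed {a | Scond P LL a} := by
  have hPhi : Continuous (PhiP P) := press_continuous _ _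
  have h1 : IsClosed {a : l2 (PTuples P) →L[ℂ] l2 (PTuples P) |
      a ∘L emb (catMap P) (catMap_injective P)
        = emb (catMap P) (catMap_injective P) ∘L PhiP P a} := by
    apply isClosed_eq
    · exact continuous_id.clm_comp continuous_const
    · exact continuous_const.clm_comp hPhi
  have h2 : IsClosed {a : l2 (PTuples P) →L[ℂ] l2 (PTuples P) |
      PhiP P a ∘L emb (diagMap P) (diagMap_injective P)
        = emb (diagMap P) (diagMap_injective P) ∘L a} := by
    apply isClosed_eq
    · exact hPhi.clm_comp continuous_const
    · exact continuous_const.clm_comp continuous_id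
  have h3 : IsClosed {a : l2 (PTuples P) →L[ℂ] l2 (PTuples P) |
      PhiP P a ∈ (StarAlgebra.adjoin ℂ (Set.range LL)).topologicalClosure} :=
    IsClosed.preimage hPhi ((StarAlgebra.adjoin ℂ (Set.range LL)).isClosed_topologicalClosure)
  exact h1.inter (h2.inter h3)

lemma isClosed_Ssub :
    IsClosed ((Ssub P LL : Set (l2 (PTuples P) →L[ℂ] l2 (PTuples P)))) := by
  have h := isClosed_Scond P LL
  have hs : (Ssub P LL : Set (l2 (PTuples P) →L[ℂ] l2 (PTuples P)))
      = {a | Scond P LL a} ∩ (star ⁻¹' {a | Scond P LL a}) := rfl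
  rw [hs]
  exact h.inter (h.preimage continuous_star)

/-- Abbreviation for the hypothesis on `Lbar`. -/
def HypL : Prop := ∀ (p : P) (x : PTuples P), Lbar p (ket x) = ket (pMul P p x)

/-- Abbreviation for the hypothesis on `LL`. -/
def HypLL : Prop := ∀ (p : P) (x y : PTuples P),
  LL p (ket (x, y)) = ket (pMul P p x, pMul P p y)

lemma hLL2 (hLL : HypLL P LL) (p : P) (z : PTuples P × PTuples P) : LL p (ket z) = ket (pMul2 P p z) := by
  obtain ⟨x, y⟩ := z
  exact hLL p x y

lemma int1 (hLbar : HypL P Lbar) (hLL : HypLL P LL) (p : P) : Lbar p ∘L emb (catMap P) (catMap_injective P)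
    = emb (catMap P) (catMap_injective P) ∘L LL p :=
  intertwine (catMap P) (catMap_injective P) (pMul2 P p) (pMul P p)
    (cat_comm P p) (Lbar p) (LL p) (hLbar p) (hLL2 P LL hLL p)

lemma int1s (hLbar : HypL P Lbar) (hLL : HypLL P LL) (p : P) : adjoint (Lbar p) ∘L emb (catMap P) (catMap_injective P)
    = emb (catMap P) (catMap_injective P) ∘L adjoint (LL p) :=
  intertwine_star (catMap P) (catMap_injective P) (pMul2 P p) (pMul P p)
    (cat_comm P p) (Lbar p) (LL p) (hLbar p) (hLL2 P LL hLL p) (cat_div P p)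

lemma int2 (hLbar : HypL P Lbar) (hLL : HypLL P LL) (p : P) : LL p ∘L emb (diagMap P) (diagMap_injective P)
    = emb (diagMap P) (diagMap_injective P) ∘L Lbar p :=
  intertwine (diagMap P) (diagMap_injective P) (pMul P p) (pMul2 P p)
    (diag_comm P p) (LL p) (Lbar p) (hLL2 P LL hLL p) (hLbar p)

lemma int2s (hLbar : HypL P Lbar) (hLL : HypLL P LL) (p : P) : adjoint (LL p) ∘L emb (diagMap P) (diagMap_injective P)
    = emb (diagMap P) (diagMap_injective P) ∘L adjoint (Lbar p) :=
  intertwine_star (diagMap P) (diagMap_injective P) (pMul P p) (pMul2 P p)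
    (diag_comm P p) (LL p) (Lbar p) (hLL2 P LL hLL p) (hLbar p) (diag_div P p)

lemma Phi_Lbar (hLbar : HypL P Lbar) (hLL : HypLL P LL) (p : P) : PhiP P (Lbar p) = LL p :=
  press_of_intertwine _ _ (int1 P Lbar LL hLbar hLL p)

lemma Psi_LL (hLbar : HypL P Lbar) (hLL : HypLL P LL) (p : P) : PsiP P (LL p) = Lbar p :=
  press_of_intertwine _ _ (int2 P Lbar LL hLbar hLL p)

lemma Phi_star_Lbar (hLbar : HypL P Lbar) (hLL : HypLL P LL) (p : P) : PhiP P (star (Lbar p)) = star (LL p) :=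
  press_of_intertwine _ _ (by
    rw [star_eq_adjoint, star_eq_adjoint]
    exact int1s P Lbar LL hLbar hLL p)

lemma Psi_star_LL (hLbar : HypL P Lbar) (hLL : HypLL P LL) (p : P) : PsiP P (star (LL p)) = star (Lbar p) :=
  press_of_intertwine _ _ (by
    rw [star_eq_adjoint, star_eq_adjoint]
    exact int2s P Lbar LL hLbar hLL p)

lemma LL_mem_closure (p : P) :
    LL p ∈ (StarAlgebra.adjoin ℂ (Set.range LL)).topologicalClosure :=
  (StarAlgebra.adjoin ℂ (Set.range LL)).le_topologicalClosure
    (StarAlgebra.subset_adjoin ℂ (Set.range LL) ⟨p, rfl⟩)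

lemma Lbar_mem_closure (p : P) :
    Lbar p ∈ (StarAlgebra.adjoin ℂ (Set.range Lbar)).topologicalClosure :=
  (StarAlgebra.adjoin ℂ (Set.range Lbar)).le_topologicalClosure
    (StarAlgebra.subset_adjoin ℂ (Set.range Lbar) ⟨p, rfl⟩)

lemma gen_mem_Ssub (hLbar : HypL P Lbar) (hLL : HypLL P LL) (p : P) : Lbar p ∈ Ssub P LL := by
  constructor
  · refine ⟨?_, ?_, ?_⟩
    · rw [Phi_Lbar P Lbar LL hLbar hLL]
      exact int1 P Lbar LL hLbar hLL p
    · rw [Phi_Lbar P Lbar LL hLbar hLL]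
      exact int2 P Lbar LL hLbar hLL p
    · rw [Phi_Lbar P Lbar LL hLbar hLL]
      exact LL_mem_closure P LL p
  · refine ⟨?_, ?_, ?_⟩
    · rw [Phi_star_Lbar P Lbar LL hLbar hLL, star_eq_adjoint, star_eq_adjoint]
      exact int1s P Lbar LL hLbar hLL p
    · rw [Phi_star_Lbar P Lbar LL hLbar hLL, star_eq_adjoint, star_eq_adjoint]
      exact int2s P Lbar LL hLbar hLL p
    · rw [Phi_star_Lbar P Lbar LL hLbar hLL]
      exact star_mem (LL_mem_closure P LL p)

lemma closureA_le_Ssub (hLbar : HypL P Lbar) (hLL : HypLL P LL) :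
    (StarAlgebra.adjoin ℂ (Set.range Lbar)).topologicalClosure ≤ Ssub P LL :=
  StarSubalgebra.topologicalClosure_minimal
    (StarAlgebra.adjoin_le (by
      rintro _ ⟨p, rfl⟩
      exact gen_mem_Ssub P Lbar LL hLbar hLL p))
    (isClosed_Ssub P LL)

/-- The conditions for the surjectivity argument. -/
def Tcond (b : l2 (PTuples P × PTuples P) →L[ℂ] l2 (PTuples P × PTuples P)) : Prop :=
  (b ∘L emb (diagMap P) (diagMap_injective P)
      = emb (diagMap P) (diagMap_injective P) ∘L PsiP P b)
  ∧ PsiP P b ∈ (StarAlgebra.adjoin ℂ (Set.range Lbar)).topologicalClosure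
  ∧ PhiP P (PsiP P b) = b

lemma Tcond_one : Tcond P Lbar 1 := by
  refine ⟨?_, ?_, ?_⟩
  · rw [show PsiP P 1 = 1 from press_one _ _]
    ext u
    simp
  · rw [show PsiP P 1 = 1 from press_one _ _]
    exact one_mem _
  · rw [show PsiP P 1 = 1 from press_one _ _]
    exact press_one _ _

lemma Tcond_mul (hLbar : HypL P Lbar) (hLL : HypLL P LL) {b₁ b₂ : l2 (PTuples P × PTuples P) →L[ℂ] l2 (PTuples P × PTuples P)}
    (h1 : Tcond P Lbar b₁) (h2 : Tcond P Lbar b₂) : Tcond P Lbar (b₁ * b₂) := by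
  have hmul : PsiP P (b₁ * b₂) = PsiP P b₁ * PsiP P b₂ := press_mul _ _ b₁ b₂ h2.1
  refine ⟨?_, ?_, ?_⟩
  · rw [hmul]
    ext u
    have hb2 := ContinuousLinearMap.ext_iff.mp h2.1 u
    rw [ContinuousLinearMap.comp_apply, ContinuousLinearMap.comp_apply] at hb2
    have hb1 := ContinuousLinearMap.ext_iff.mp h1.1 (PsiP P b₂ u)
    rw [ContinuousLinearMap.comp_apply, ContinuousLinearMap.comp_apply] at hb1
    rw [ContinuousLinearMap.comp_apply, ContinuousLinearMap.comp_apply,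
      ContinuousLinearMap.mul_apply, hb2, hb1, ContinuousLinearMap.mul_apply]
  · rw [hmul]
    exact mul_mem h1.2.1 h2.2.1
  · rw [hmul]
    have hc1 : PsiP P b₂ ∘L emb (catMap P) (catMap_injective P)
        = emb (catMap P) (catMap_injective P) ∘L PhiP P (PsiP P b₂) :=
      ((closureA_le_Ssub P Lbar LL hLbar hLL) h2.2.1).1.1
    rw [show PhiP P (PsiP P b₁ * PsiP P b₂) = PhiP P (PsiP P b₁) * PhiP P (PsiP P b₂)
      from press_mul _ _ _ _ hc1, h1.2.2, h2.2.2]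

lemma Tcond_add {b₁ b₂ : l2 (PTuples P × PTuples P) →L[ℂ] l2 (PTuples P × PTuples P)}
    (h1 : Tcond P Lbar b₁) (h2 : Tcond P Lbar b₂) : Tcond P Lbar (b₁ + b₂) := by
  have hadd : PsiP P (b₁ + b₂) = PsiP P b₁ + PsiP P b₂ := press_add _ _ b₁ b₂
  refine ⟨?_, ?_, ?_⟩
  · rw [hadd, add_comp, comp_add, h1.1, h2.1]
  · rw [hadd]
    exact add_mem h1.2.1 h2.2.1
  · rw [hadd, show PhiP P (PsiP P b₁ + PsiP P b₂)
      = PhiP P (PsiP P b₁) + PhiP P (PsiP P b₂) from press_add _ _ _ _, h1.2.2, h2.2.2]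

lemma Tcond_smul (c : ℂ) {b : l2 (PTuples P × PTuples P) →L[ℂ] l2 (PTuples P × PTuples P)}
    (h : Tcond P Lbar b) : Tcond P Lbar (c • b) := by
  have hsmul : PsiP P (c • b) = c • PsiP P b := press_smul _ _ c b
  refine ⟨?_, ?_, ?_⟩
  · rw [hsmul, smul_comp, comp_smul, h.1]
  · rw [hsmul]
    exact SMulMemClass.smul_mem c h.2.1
  · rw [hsmul, show PhiP P (c • PsiP P b) = c • PhiP P (PsiP P b)
      from press_smul _ _ _ _, h.2.2]

/-- The closed star-subalgebra witnessing surjectivity. -/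
def Tsub (hLbar : HypL P Lbar) (hLL : HypLL P LL) : StarSubalgebra ℂ (l2 (PTuples P × PTuples P) →L[ℂ] l2 (PTuples P × PTuples P)) where
  carrier := {b | Tcond P Lbar b ∧ Tcond P Lbar (star b)}
  mul_mem' := fun {a b} ha hb => by
    refine ⟨Tcond_mul P Lbar LL hLbar hLL ha.1 hb.1, ?_⟩
    rw [star_mul]
    exact Tcond_mul P Lbar LL hLbar hLL hb.2 ha.2
  one_mem' := by
    refine ⟨Tcond_one P Lbar, ?_⟩
    rw [star_one]
    exact Tcond_one P Lbar
  add_mem' := fun {a b} ha hb => by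
    refine ⟨Tcond_add P Lbar ha.1 hb.1, ?_⟩
    rw [star_add]
    exact Tcond_add P Lbar ha.2 hb.2
  zero_mem' := by
    have h0 : (0 : l2 (PTuples P × PTuples P) →L[ℂ] l2 (PTuples P × PTuples P))
        = (0 : ℂ) • 1 := by simp
    rw [h0]
    refine ⟨Tcond_smul P Lbar 0 (Tcond_one P Lbar), ?_⟩
    rw [star_smul, star_one]
    exact Tcond_smul P Lbar _ (Tcond_one P Lbar)
  algebraMap_mem' := fun c => by
    rw [Algebra.algebraMap_eq_smul_one]
    refine ⟨Tcond_smul P Lbar c (Tcond_one P Lbar), ?_⟩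
    rw [star_smul, star_one]
    exact Tcond_smul P Lbar _ (Tcond_one P Lbar)
  star_mem' := fun {a} ha => by
    refine ⟨ha.2, ?_⟩
    rw [star_star]
    exact ha.1

lemma isClosed_Tcond : IsClosed {b | Tcond P Lbar b} := by
  have hPsi : Continuous (PsiP P) := press_continuous _ _
  have hPhi : Continuous (PhiP P) := press_continuous _ _
  have h1 : IsClosed {b : l2 (PTuples P × PTuples P) →L[ℂ] l2 (PTuples P × PTuples P) |
      b ∘L emb (diagMap P) (diagMap_injective P)
        = emb (diagMap P) (diagMap_injective P) ∘L PsiP P b} := by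
    apply isClosed_eq
    · exact continuous_id.clm_comp continuous_const
    · exact continuous_const.clm_comp hPsi
  have h2 : IsClosed {b : l2 (PTuples P × PTuples P) →L[ℂ] l2 (PTuples P × PTuples P) |
      PsiP P b ∈ (StarAlgebra.adjoin ℂ (Set.range Lbar)).topologicalClosure} :=
    IsClosed.preimage hPsi
      ((StarAlgebra.adjoin ℂ (Set.range Lbar)).isClosed_topologicalClosure)
  have h3 : IsClosed {b : l2 (PTuples P × PTuples P) →L[ℂ] l2 (PTuples P × PTuples P) |
      PhiP P (PsiP P b) = b} := by
    apply isClosed_eq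
    · exact hPhi.comp hPsi
    · exact continuous_id
  exact h1.inter (h2.inter h3)

lemma isClosed_Tsub (hLbar : HypL P Lbar) (hLL : HypLL P LL) :
    IsClosed ((Tsub P Lbar LL hLbar hLL : Set
      (l2 (PTuples P × PTuples P) →L[ℂ] l2 (PTuples P × PTuples P)))) := by
  have h := isClosed_Tcond P Lbar
  have hs : (Tsub P Lbar LL hLbar hLL : Set
      (l2 (PTuples P × PTuples P) →L[ℂ] l2 (PTuples P × PTuples P)))
      = {b | Tcond P Lbar b} ∩ (star ⁻¹' {b | Tcond P Lbar b}) := rfl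
  rw [hs]
  exact h.inter (h.preimage continuous_star)

lemma gen_mem_Tsub (hLbar : HypL P Lbar) (hLL : HypLL P LL) (p : P) : LL p ∈ Tsub P Lbar LL hLbar hLL := by
  constructor
  · refine ⟨?_, ?_, ?_⟩
    · rw [Psi_LL P Lbar LL hLbar hLL]
      exact int2 P Lbar LL hLbar hLL p
    · rw [Psi_LL P Lbar LL hLbar hLL]
      exact Lbar_mem_closure P Lbar p
    · rw [Psi_LL P Lbar LL hLbar hLL]
      exact Phi_Lbar P Lbar LL hLbar hLL p
  · refine ⟨?_, ?_, ?_⟩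
    · rw [Psi_star_LL P Lbar LL hLbar hLL, star_eq_adjoint, star_eq_adjoint]
      exact int2s P Lbar LL hLbar hLL p
    · rw [Psi_star_LL P Lbar LL hLbar hLL]
      exact star_mem (Lbar_mem_closure P Lbar p)
    · rw [Psi_star_LL P Lbar LL hLbar hLL]
      exact Phi_star_Lbar P Lbar LL hLbar hLL p

lemma closureB_le_Tsub (hLbar : HypL P Lbar) (hLL : HypLL P LL) :
    (StarAlgebra.adjoin ℂ (Set.range LL)).topologicalClosure ≤ Tsub P Lbar LL hLbar hLL :=
  StarSubalgebra.topologicalClosure_minimal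
    (StarAlgebra.adjoin_le (by
      rintro _ ⟨p, rfl⟩
      exact gen_mem_Tsub P Lbar LL hLbar hLL p))
    (isClosed_Tsub P Lbar LL hLbar hLL)

/-- The star-algebra homomorphism `a ↦ V* a V`. -/
def phiHom (hLbar : HypL P Lbar) (hLL : HypLL P LL) : (StarAlgebra.adjoin ℂ (Set.range Lbar)).topologicalClosure →⋆ₐ[ℂ]
    (l2 (PTuples P × PTuples P) →L[ℂ] l2 (PTuples P × PTuples P)) where
  toFun a := PhiP P (a : l2 (PTuples P) →L[ℂ] l2 (PTuples P))
  map_one' := press_one _ _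
  map_mul' a b := press_mul _ _ _ _
    (((closureA_le_Ssub P Lbar LL hLbar hLL) b.2).1.1)
  map_zero' := press_zero _ _
  map_add' a b := press_add _ _ _ _
  commutes' c := by
    show PhiP P (algebraMap ℂ (l2 (PTuples P) →L[ℂ] l2 (PTuples P)) c) = _
    rw [Algebra.algebraMap_eq_smul_one, show PhiP P ((c : ℂ) • 1) = c • PhiP P 1
      from press_smul _ _ _ _, show PhiP P 1 = 1 from press_one _ _,
      ← Algebra.algebraMap_eq_smul_one]
  map_star' a := by
    show PhiP P (star (a : l2 (PTuples P) →L[ℂ] l2 (PTuples P))) = _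
    exact press_star _ _ _

end Main

end SelfAbsorbAux

/-- **Corollary (the enhanced left regular representation is self-absorbing).**
The map `L̄_p ↦ L̄_p ⊗ L̄_p` extends to a `*`-isomorphism from `𝒯̄_λ(P)` onto the
C*-algebra generated by `{L̄_p ⊗ L̄_p : p ∈ P}` in `B(ℋ̄ ⊗ ℋ̄)`. -/
theorem enhanced_self_absorbing (P : Submonoid G)
    (Lbar : P → (l2 (PTuples P) →L[ℂ] l2 (PTuples P)))
    (hLbar : ∀ (p : P) (x : PTuples P), Lbar p (ket x) = ket (pMul P p x))
    (LL : P → (l2 (PTuples P × PTuples P) →L[ℂ] l2 (PTuples P × PTuples P)))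
    (hLL : ∀ (p : P) (x y : PTuples P), LL p (ket (x, y)) = ket (pMul P p x, pMul P p y)) :
    ∃ φ : (StarAlgebra.adjoin ℂ (Set.range Lbar)).topologicalClosure →⋆ₐ[ℂ]
        (l2 (PTuples P × PTuples P) →L[ℂ] l2 (PTuples P × PTuples P)),
      (∀ (p : P) (h : Lbar p ∈ (StarAlgebra.adjoin ℂ (Set.range Lbar)).topologicalClosure),
        φ ⟨Lbar p, h⟩ = LL p) ∧
      (∀ a, ‖φ a‖ = ‖(a : l2 (PTuples P) →L[ℂ] l2 (PTuples P))‖) ∧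
      (∀ a, φ a ∈ (StarAlgebra.adjoin ℂ (Set.range LL)).topologicalClosure) ∧
      (∀ b ∈ (StarAlgebra.adjoin ℂ (Set.range LL)).topologicalClosure, ∃ a, φ a = b) := by
  refine ⟨SelfAbsorbAux.phiHom P Lbar LL hLbar hLL, ?_, ?_, ?_, ?_⟩
  · intro p h
    exact SelfAbsorbAux.Phi_Lbar P Lbar LL hLbar hLL p
  · intro a
    show ‖SelfAbsorbAux.PhiP P (a : l2 (PTuples P) →L[ℂ] l2 (PTuples P))‖
        = ‖(a : l2 (PTuples P) →L[ℂ] l2 (PTuples P))‖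
    refine le_antisymm (SelfAbsorbAux.press_norm_le _ _ _) ?_
    have hrec : SelfAbsorbAux.PsiP P (SelfAbsorbAux.PhiP P
        (a : l2 (PTuples P) →L[ℂ] l2 (PTuples P)))
        = (a : l2 (PTuples P) →L[ℂ] l2 (PTuples P)) :=
      SelfAbsorbAux.press_of_intertwine _ _
        (((SelfAbsorbAux.closureA_le_Ssub P Lbar LL hLbar hLL) a.2).1.2.1)
    calc ‖(a : l2 (PTuples P) →L[ℂ] l2 (PTuples P))‖
        = ‖SelfAbsorbAux.PsiP P (SelfAbsorbAux.PhiP P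
            (a : l2 (PTuples P) →L[ℂ] l2 (PTuples P)))‖ := by rw [hrec]
      _ ≤ ‖SelfAbsorbAux.PhiP P (a : l2 (PTuples P) →L[ℂ] l2 (PTuples P))‖ :=
          SelfAbsorbAux.press_norm_le _ _ _
  · intro a
    exact ((SelfAbsorbAux.closureA_le_Ssub P Lbar LL hLbar hLL) a.2).1.2.2
  · intro b hb
    refine ⟨⟨SelfAbsorbAux.PsiP P b,
      ((SelfAbsorbAux.closureB_le_Tsub P Lbar LL hLbar hLL) hb).1.2.1⟩, ?_⟩
    exact ((SelfAbsorbAux.closureB_le_Tsub P Lbar LL hLbar hLL) hb).1.2.2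

end
end

section
/- Let P be a submonoid of a (discrete) group G and let a_0, a_1, …, a_n be neutral words over P. If ∏_{i=1}^{n} (L̄̇_{a_0} − L̄̇_{a_0 a_i}) = 0 in B(ℋ̄), where a_0 a_i denotes the concatenation of the words a_0 and a_i, then K(a_0) = K(a_0 a_i) for some i ∈ {1, …, n}. (The factors commute, being differences of commuting diagonal projections, so the product is unambiguous.) -/
noncomputable section
set_option synthInstance.maxHeartbeats 1000000
set_option maxHeartbeats 1000000
set_option linter.unusedVariables false

open scoped ENNReal

variable {G : Type*} [Group G]

/-! ### Auxiliary lemmas -/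

open scoped InnerProductSpace

lemma ket_eq_single {ι : Type*} [DecidableEq ι] (i : ι) : (ket i : l2 ι) = lp.single 2 i 1 := by
  unfold ket
  congr!

lemma inner_ket {ι : Type*} (i : ι) (f : l2 ι) : ⟪ket i, f⟫_ℂ = f i := by
  classical
  rw [ket_eq_single, lp.inner_single_left, RCLike.inner_apply, map_one, mul_one]

lemma inner_ket_ket {ι : Type*} [DecidableEq ι] (i j : ι) :
    ⟪ket i, ket j⟫_ℂ = if i = j then 1 else 0 := by
  rw [inner_ket, ket_eq_single]
  by_cases h : i = j
  · subst h
    rw [if_pos rfl]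
    exact lp.single_apply_self _ _ _
  · rw [lp.single_apply_ne _ _ _ h, if_neg h]

lemma ket_ne_zero {ι : Type*} (i : ι) : (ket i : l2 ι) ≠ 0 := by
  classical
  intro h
  have := congrArg (fun f => ⟪ket i, f⟫_ℂ) h
  simp only [inner_ket_ket, if_pos rfl, inner_zero_right] at this
  exact one_ne_zero this

lemma ket_injective {ι : Type*} : Function.Injective (ket (ι := ι)) := by
  classical
  intro i j h
  have := congrArg (fun f => ⟪ket i, f⟫_ℂ) h
  simp only [inner_ket_ket, if_pos rfl] at this
  by_contra hij
  rw [if_neg hij] at this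
  exact one_ne_zero this

lemma ext_ket {ι : Type*} {f g : l2 ι} (h : ∀ i, ⟪ket i, f⟫_ℂ = ⟪ket i, g⟫_ℂ) : f = g := by
  apply lp.ext
  funext i
  have := h i
  rwa [inner_ket, inner_ket] at this

lemma star_apply_of_eq {ι : Type*} (V : l2 ι →L[ℂ] l2 ι) (m : ι → ι)
    (hm : Function.Injective m) (hV : ∀ x, V (ket x) = ket (m x)) (x : ι) :
    (star V) (ket (m x)) = ket x := by
  classical
  apply ext_ket
  intro u
  rw [ContinuousLinearMap.star_eq_adjoint, ContinuousLinearMap.adjoint_inner_right, hV,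
    inner_ket_ket, inner_ket_ket]
  simp [hm.eq_iff]

lemma star_apply_of_ne {ι : Type*} (V : l2 ι →L[ℂ] l2 ι) (m : ι → ι)
    (hV : ∀ x, V (ket x) = ket (m x)) (t : ι) (ht : ∀ x, m x ≠ t) :
    (star V) (ket t) = 0 := by
  classical
  apply ext_ket
  intro u
  rw [ContinuousLinearMap.star_eq_adjoint, ContinuousLinearMap.adjoint_inner_right, hV,
    inner_ket_ket, inner_zero_right, if_neg (ht u)]

lemma dotted_nil {A : Type*} [Monoid A] [Star A] (P : Submonoid G) (V : P → A) :
    dotted P V ([] : Word P) = 1 := by simp [dotted]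

lemma dotted_cons {A : Type*} [Monoid A] [Star A] (P : Submonoid G) (V : P → A)
    (pq : P × P) (w : Word P) :
    dotted P V (pq :: w) = (star (V pq.1) * V pq.2) * dotted P V w := by
  simp [dotted]

lemma dotted_append {A : Type*} [Monoid A] [Star A] (P : Submonoid G) (V : P → A)
    (v w : Word P) :
    dotted P V (v ++ w) = dotted P V v * dotted P V w := by
  simp [dotted]

lemma wordElem_nil (P : Submonoid G) : wordElem P ([] : Word P) = 1 := by simp [wordElem]

lemma wordElem_cons (P : Submonoid G) (pq : P × P) (w : Word P) :
    wordElem P (pq :: w) = ((pq.1 : G)⁻¹ * (pq.2 : G)) * wordElem P w := by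
  simp [wordElem]

lemma wordElem_append (P : Submonoid G) (v w : Word P) :
    wordElem P (v ++ w) = wordElem P v * wordElem P w := by
  simp [wordElem]

lemma pmul_left_injective (P : Submonoid G) (p : P) :
    Function.Injective (fun q : P => p * q) := by
  intro a b h
  apply Subtype.ext
  have : (p : G) * (a : G) = (p : G) * (b : G) := by
    have := congrArg (Subtype.val) h
    simpa using this
  exact mul_left_cancel this

lemma pMul_injective (P : Submonoid G) (p : P) :
    Function.Injective (pMul P p) := by
  rintro ⟨m, f⟩ ⟨m', f'⟩ h
  obtain rfl : m = m' := congrArg Sigma.fst h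
  have h2 : (fun i => p * f i) = (fun i => p * f' i) :=
    eq_of_heq (Sigma.mk.inj_iff.mp h).2
  exact congrArg (Sigma.mk m) (funext fun i => pmul_left_injective P p (congrFun h2 i))

lemma L_dichotomy (P : Submonoid G) (L : P → (l2 P →L[ℂ] l2 P))
    (hL : ∀ p q : P, L p (ket q) = ket (p * q)) :
    ∀ (w : Word P) (q : P), dotted P L w (ket q) = 0 ∨
      ∃ r : P, dotted P L w (ket q) = ket r ∧ (r : G) = wordElem P w * q := by
  intro w
  induction w with
  | nil =>
    intro q
    right
    exact ⟨q, by rw [dotted_nil, ContinuousLinearMap.one_apply],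
      by rw [wordElem_nil, one_mul]⟩
  | cons pq w ih =>
    intro q
    rcases ih q with h0 | ⟨r, hr, hrg⟩
    · left
      rw [dotted_cons, ContinuousLinearMap.mul_apply, h0, map_zero]
    · rw [dotted_cons, ContinuousLinearMap.mul_apply, hr,
        ContinuousLinearMap.mul_apply, hL]
      by_cases hc : ∃ s : P, pq.1 * s = pq.2 * r
      · obtain ⟨s, hs⟩ := hc
        right
        refine ⟨s, ?_, ?_⟩
        · rw [← hs]
          exact star_apply_of_eq _ _ (pmul_left_injective P pq.1) (hL pq.1) s
        · have hsg : (pq.1 : G) * (s : G) = (pq.2 : G) * (r : G) := by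
            have := congrArg (Subtype.val) hs
            simpa using this
          rw [wordElem_cons]
          calc (s : G) = (pq.1 : G)⁻¹ * ((pq.1 : G) * (s : G)) := by group
            _ = (pq.1 : G)⁻¹ * ((pq.2 : G) * (r : G)) := by rw [hsg]
            _ = (pq.1 : G)⁻¹ * ((pq.2 : G) * (wordElem P w * (q : G))) := by rw [hrg]
            _ = ((pq.1 : G)⁻¹ * (pq.2 : G)) * wordElem P w * (q : G) := by group
      · left
        push_neg at hc
        exact star_apply_of_ne _ _ (hL pq.1) _ (fun s => hc s)

/-- For a neutral word, `L̇_w δ_q` is `0` or `δ_q`. -/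
lemma L_neutral_dichotomy (P : Submonoid G) (L : P → (l2 P →L[ℂ] l2 P))
    (hL : ∀ p q : P, L p (ket q) = ket (p * q)) (w : Word P) (hw : IsNeutral P w) (q : P) :
    dotted P L w (ket q) = 0 ∨ dotted P L w (ket q) = ket q := by
  rcases L_dichotomy P L hL w q with h | ⟨r, hr, hrg⟩
  · exact Or.inl h
  · right
    have : r = q := Subtype.ext (by rw [hrg, hw, one_mul])
    rwa [this] at hr

lemma Lbar_dichotomy (P : Submonoid G) (L : P → (l2 P →L[ℂ] l2 P))
    (hL : ∀ p q : P, L p (ket q) = ket (p * q))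
    (Lbar : P → (l2 (PTuples P) →L[ℂ] l2 (PTuples P)))
    (hLbar : ∀ (p : P) (x : PTuples P), Lbar p (ket x) = ket (pMul P p x)) :
    ∀ (w : Word P) (x : PTuples P),
      ((∃ j, dotted P L w (ket (x.2 j)) = 0) ∧ dotted P Lbar w (ket x) = 0) ∨
      (∃ y : Fin (x.1 + 1) → P, (∀ j, dotted P L w (ket (x.2 j)) = ket (y j)) ∧
        dotted P Lbar w (ket x) = ket ⟨x.1, y⟩) := by
  intro w
  induction w with
  | nil =>
    rintro ⟨m, f⟩
    right
    exact ⟨f, fun j => by rw [dotted_nil, ContinuousLinearMap.one_apply],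
      by rw [dotted_nil, ContinuousLinearMap.one_apply]⟩
  | cons pq w ih =>
    intro x
    rcases ih x with ⟨⟨j, hj⟩, hbar⟩ | ⟨y, hy, hbar⟩
    · left
      refine ⟨⟨j, ?_⟩, ?_⟩
      · rw [dotted_cons, ContinuousLinearMap.mul_apply, hj, map_zero]
      · rw [dotted_cons, ContinuousLinearMap.mul_apply, hbar, map_zero]
    · by_cases hc : ∀ j, ∃ s : P, pq.1 * s = pq.2 * y j
      · choose s hs using hc
        right
        refine ⟨s, fun j => ?_, ?_⟩
        · rw [dotted_cons, ContinuousLinearMap.mul_apply, hy j,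
            ContinuousLinearMap.mul_apply, hL, ← hs j]
          exact star_apply_of_eq _ _ (pmul_left_injective P pq.1) (hL pq.1) (s j)
        · rw [dotted_cons, ContinuousLinearMap.mul_apply, hbar,
            ContinuousLinearMap.mul_apply, hLbar]
          have hpm : pMul P pq.2 ⟨x.1, y⟩ = pMul P pq.1 ⟨x.1, s⟩ := by
            unfold pMul
            exact congrArg (Sigma.mk x.1) (funext fun j => (hs j).symm)
          rw [hpm]
          exact star_apply_of_eq _ _ (pMul_injective P pq.1) (hLbar pq.1) _
      · push_neg at hc
        obtain ⟨j0, hj0⟩ := hc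
        left
        constructor
        · refine ⟨j0, ?_⟩
          rw [dotted_cons, ContinuousLinearMap.mul_apply, hy j0,
            ContinuousLinearMap.mul_apply, hL]
          exact star_apply_of_ne _ _ (hL pq.1) _ (fun s => hj0 s)
        · rw [dotted_cons, ContinuousLinearMap.mul_apply, hbar,
            ContinuousLinearMap.mul_apply, hLbar]
          apply star_apply_of_ne _ _ (hLbar pq.1)
          rintro ⟨m, f⟩ hz
          have hfst : m = x.1 := congrArg Sigma.fst hz
          subst hfst
          have hz' : (⟨x.1, fun i => pq.1 * f i⟩ : PTuples P)
              = ⟨x.1, fun j => pq.2 * y j⟩ := hz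
          have h2 : (fun i => pq.1 * f i) = (fun j => pq.2 * y j) :=
            eq_of_heq (Sigma.mk.inj_iff.mp hz').2
          exact hj0 (f j0) (congrFun h2 j0)

lemma KIdeal_append_subset (P : Submonoid G) (L : P → (l2 P →L[ℂ] l2 P))
    (hL : ∀ p q : P, L p (ket q) = ket (p * q)) (v w : Word P) (hw : IsNeutral P w) :
    KIdeal P L (v ++ w) ⊆ KIdeal P L v := by
  intro q hq
  have hq' : dotted P L v (dotted P L w (ket q)) = ket q := by
    have : dotted P L (v ++ w) (ket q) = ket q := hq
    rwa [dotted_append, ContinuousLinearMap.mul_apply] at this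
  rcases L_neutral_dichotomy P L hL w hw q with h | h
  · rw [h, map_zero] at hq'
    exact absurd hq'.symm (ket_ne_zero q)
  · rw [h] at hq'
    exact hq'

lemma list_prod_fix {H : Type*} [NormedAddCommGroup H] [NormedSpace ℂ H]
    (l : List (H →L[ℂ] H)) (v : H) (h : ∀ T ∈ l, T v = v) : l.prod v = v := by
  induction l with
  | nil => simp
  | cons T l ih =>
    rw [List.prod_cons, ContinuousLinearMap.mul_apply,
      ih (fun S hS => h S (List.mem_cons_of_mem _ hS)), h T List.mem_cons_self]

/-- **(Remark 4.5; the unit fiber of `C*_s(P) ≅ 𝒯̄(P)` is "free".)**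
If `a₀, a₁, …, a_n` are neutral words over `P` and
`∏_{i=1}^n (L̄̇_{a₀} - L̄̇_{a₀ aᵢ}) = 0` in `B(ℋ̄)`, then `K(a₀) = K(a₀ aᵢ)` for some `i`. -/
theorem enhanced_prod_eq_zero_imp (P : Submonoid G)
    (L : P → (l2 P →L[ℂ] l2 P))
    (hL : ∀ p q : P, L p (ket q) = ket (p * q))
    (Lbar : P → (l2 (PTuples P) →L[ℂ] l2 (PTuples P)))
    (hLbar : ∀ (p : P) (x : PTuples P), Lbar p (ket x) = ket (pMul P p x))
    (a₀ : Word P) (n : ℕ) (a : Fin n → Word P)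
    (h₀ : IsNeutral P a₀) (ha : ∀ i, IsNeutral P (a i))
    (hprod : (List.ofFn (fun i : Fin n =>
      dotted P Lbar a₀ - dotted P Lbar (a₀ ++ a i))).prod = 0) :
    ∃ i, KIdeal P L a₀ = KIdeal P L (a₀ ++ a i) := by
  by_contra hcon
  push_neg at hcon
  rcases n with _ | m
  · simp only [List.ofFn_zero, List.prod_nil] at hprod
    have h1 := congrArg (fun T : l2 (PTuples P) →L[ℂ] l2 (PTuples P) =>
      T (ket (⟨0, fun _ => 1⟩ : PTuples P))) hprod
    simp only [ContinuousLinearMap.one_apply, ContinuousLinearMap.zero_apply] at h1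
    exact ket_ne_zero _ h1
  · have hwit : ∀ i : Fin (m + 1), ∃ p : P,
        p ∈ KIdeal P L a₀ ∧ p ∉ KIdeal P L (a₀ ++ a i) := by
      intro i
      have hsub := KIdeal_append_subset P L hL a₀ (a i) (ha i)
      have hns : ¬ KIdeal P L a₀ ⊆ KIdeal P L (a₀ ++ a i) :=
        fun hs => hcon i (le_antisymm hs hsub)
      exact Set.not_subset.mp hns
    choose p hp1 hp2 using hwit
    have hneu : ∀ i : Fin (m + 1), IsNeutral P (a₀ ++ a i) := by
      intro i
      unfold IsNeutral
      rw [wordElem_append, h₀, ha i, one_mul]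
    set x : PTuples P := ⟨m, p⟩ with hxdef
    have hfix : ∀ T ∈ List.ofFn (fun i : Fin (m + 1) =>
        dotted P Lbar a₀ - dotted P Lbar (a₀ ++ a i)), T (ket x) = ket x := by
      intro T hT
      rw [List.mem_ofFn] at hT
      obtain ⟨i, rfl⟩ := hT
      have h1 : dotted P Lbar a₀ (ket x) = ket x := by
        rcases Lbar_dichotomy P L hL Lbar hLbar a₀ x with ⟨⟨j, hj⟩, _⟩ | ⟨y, hy, hbar⟩
        · rw [show x.2 j = p j from rfl, (hp1 j : dotted P L a₀ (ket (p j)) = ket (p j))] at hj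
          exact absurd hj (ket_ne_zero _)
        · have hyp : y = p := by
            funext j
            have := (hy j).symm.trans (hp1 j : dotted P L a₀ (ket (p j)) = ket (p j))
            exact ket_injective this
          rw [hbar, hyp]
      have h2 : dotted P Lbar (a₀ ++ a i) (ket x) = 0 := by
        have hz : dotted P L (a₀ ++ a i) (ket (p i)) = 0 := by
          rcases L_neutral_dichotomy P L hL (a₀ ++ a i) (hneu i) (p i) with h | h
          · exact h
          · exact absurd h (hp2 i)
        rcases Lbar_dichotomy P L hL Lbar hLbar (a₀ ++ a i) x with ⟨_, h0⟩ | ⟨y, hy, _⟩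
        · exact h0
        · have := hy i
          rw [show x.2 i = p i from rfl, hz] at this
          exact absurd this.symm (ket_ne_zero _)
      rw [ContinuousLinearMap.sub_apply, h1, h2, sub_zero]
    have hfin := list_prod_fix _ _ hfix
    rw [hprod, ContinuousLinearMap.zero_apply] at hfin
    exact ket_ne_zero _ hfin.symm

end
end

section
/- Let P be a submonoid of a (discrete) group G and let V = {V_p}_{p∈P} be an isometric representation of P on a Hilbert space H. Define W on ℓ²(P) ⊗ H, realized as the ℓ²-direct sum ⊕_{q∈P} H, by (Wξ)_q = V_q ξ_q. Then W is a well-defined isometry in B(ℓ²(P) ⊗ H) and W (L_p ⊗ I_H) = (L_p ⊗ V_p) W for all p ∈ P. Consequently ‖T‖ ≤ ‖φ(T)‖ for any map φ on operators of the form T = Σ (products of the L_p's) sending each L_p ⊗ I to L_p ⊗ V_p. -/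
noncomputable section
set_option synthInstance.maxHeartbeats 1000000
set_option maxHeartbeats 1000000
set_option linter.unusedVariables false

open scoped ENNReal

variable {G : Type*} [Group G]

/-- The element `δ_i ⊗ ξ` of the `ℓ²`-direct sum `⊕_{i ∈ ι} H`. -/
noncomputable def ketV {ι : Type*} {H : Type*} [NormedAddCommGroup H] [InnerProductSpace ℂ H]
    (i : ι) (ξ : H) : lp (fun _ : ι => H) 2 :=
  haveI := Classical.decEq ι
  lp.single 2 i ξ

/-- **(The intertwining isometry `W`.)**  For an isometric representation `V` of `P` on
`H`, the operator `W` on `ℓ²(P) ⊗ H = ⊕_{q ∈ P} H` given by `(Wξ)_q = V_q ξ_q` is a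
well-defined isometry satisfying `W (L_p ⊗ I) = (L_p ⊗ V_p) W` for all `p`; consequently
`‖T‖ ≤ ‖φ(T)‖` for sums `T` of products of the `L_p ⊗ I`'s, where `φ` replaces each
`L_p ⊗ I` by `L_p ⊗ V_p`. -/
theorem intertwining_isometry (P : Submonoid G)
    {H : Type*} [NormedAddCommGroup H] [InnerProductSpace ℂ H] [CompleteSpace H]
    (V : P → (H →L[ℂ] H))
    (hV1 : V 1 = 1)
    (hVmul : ∀ p q : P, V (p * q) = V p * V q)
    (hViso : ∀ p : P, star (V p) * V p = 1)
    (Tid : P → (lp (fun _ : P => H) 2 →L[ℂ] lp (fun _ : P => H) 2))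
    (hTid : ∀ (p q : P) (ξ : H), Tid p (ketV q ξ) = ketV (p * q) ξ)
    (TV : P → (lp (fun _ : P => H) 2 →L[ℂ] lp (fun _ : P => H) 2))
    (hTV : ∀ (p q : P) (ξ : H), TV p (ketV q ξ) = ketV (p * q) (V p ξ)) :
    ∃ W : lp (fun _ : P => H) 2 →L[ℂ] lp (fun _ : P => H) 2,
      (∀ (ξ : lp (fun _ : P => H) 2) (q : P), (W ξ : ∀ _ : P, H) q = V q (ξ q)) ∧
      (∀ ξ, ‖W ξ‖ = ‖ξ‖) ∧
      (∀ p : P, W ∘L Tid p = TV p ∘L W) ∧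
      (∀ (m : ℕ) (c : Fin m → ℂ) (ws : Fin m → List P),
        ‖∑ i, c i • ((ws i).map Tid).prod‖ ≤ ‖∑ i, c i • ((ws i).map TV).prod‖) := by

  classical
  letI : DecidableEq P := Classical.decEq P
  -- each V p is isometric
  have hiso : ∀ (p : P) (x : H), ‖V p x‖ = ‖x‖ := by
    intro p x
    have hx : (star (V p)) (V p x) = x := by
      calc (star (V p)) (V p x) = (star (V p) * V p) x := rfl
        _ = x := by rw [hViso p]; rfl
    have h2 : (inner ℂ (V p x) (V p x) : ℂ) = inner ℂ x x := by
      rw [← ContinuousLinearMap.adjoint_inner_left, ← ContinuousLinearMap.star_eq_adjoint, hx]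
    have h3 : ‖V p x‖ ^ 2 = ‖x‖ ^ 2 := by
      have := congrArg Complex.re h2
      rwa [← @inner_self_eq_norm_sq ℂ, ← @inner_self_eq_norm_sq ℂ]
    nlinarith [norm_nonneg (V p x), norm_nonneg x]
  have h2pos : (0 : ℝ) < (2 : ℝ≥0∞).toReal := by norm_num
  -- membership in lp
  have hmem : ∀ ξ : lp (fun _ : P => H) 2, Memℓp (fun q => V q (ξ q)) 2 := by
    intro ξ
    apply memℓp_gen
    have hs : Summable fun q : P => ‖ξ q‖ ^ (2 : ℝ≥0∞).toReal :=
      (memℓp_gen_iff h2pos).1 (lp.memℓp ξ)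
    convert hs using 2 with q
    rw [hiso]
  -- the linear map W
  let W0 : lp (fun _ : P => H) 2 →ₗ[ℂ] lp (fun _ : P => H) 2 :=
    { toFun := fun ξ => ⟨fun q => V q (ξ q), hmem ξ⟩
      map_add' := by
        intro ξ η
        apply lp.ext
        funext q
        show V q ((ξ + η : lp (fun _ : P => H) 2) q) = _
        rw [lp.coeFn_add]
        show V q (ξ q + η q) = (((⟨fun q => V q (ξ q), hmem ξ⟩ : lp (fun _ : P => H) 2) +
          ⟨fun q => V q (η q), hmem η⟩ : lp (fun _ : P => H) 2) : ∀ _ : P, H) q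
        rw [lp.coeFn_add, map_add]
        rfl
      map_smul' := by
        intro c ξ
        apply lp.ext
        funext q
        show V q ((c • ξ : lp (fun _ : P => H) 2) q) = _
        rw [lp.coeFn_smul]
        show V q (c • ξ q) = ((c • (⟨fun q => V q (ξ q), hmem ξ⟩ : lp (fun _ : P => H) 2) :
          lp (fun _ : P => H) 2) : ∀ _ : P, H) q
        rw [lp.coeFn_smul, map_smul]
        rfl }
  have hW0app : ∀ (ξ : lp (fun _ : P => H) 2) (q : P), (W0 ξ : ∀ _ : P, H) q = V q (ξ q) :=
    fun ξ q => rfl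
  -- W0 is norm-preserving
  have hW0norm : ∀ ξ, ‖W0 ξ‖ = ‖ξ‖ := by
    intro ξ
    have ha := lp.norm_rpow_eq_tsum h2pos (W0 ξ)
    have hb := lp.norm_rpow_eq_tsum h2pos ξ
    have hc : ‖W0 ξ‖ ^ (2 : ℝ≥0∞).toReal = ‖ξ‖ ^ (2 : ℝ≥0∞).toReal := by
      rw [ha, hb]
      congr 1
      funext q
      rw [hW0app, hiso]
    exact Real.rpow_left_injOn h2pos.ne' (norm_nonneg _) (norm_nonneg _) hc
  let W : lp (fun _ : P => H) 2 →L[ℂ] lp (fun _ : P => H) 2 :=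
    W0.mkContinuous 1 (fun ξ => by rw [hW0norm, one_mul])
  have hWapp : ∀ (ξ : lp (fun _ : P => H) 2) (q : P), (W ξ : ∀ _ : P, H) q = V q (ξ q) :=
    fun ξ q => rfl
  have hWnorm : ∀ ξ, ‖W ξ‖ = ‖ξ‖ := fun ξ => hW0norm ξ
  -- action on ketV
  have hWket : ∀ (q : P) (ξ : H), W (ketV q ξ) = ketV q (V q ξ) := by
    intro q ξ
    apply lp.ext
    funext r
    rw [hWapp]
    show V r ((lp.single 2 q ξ : ∀ _ : P, H) r) = (lp.single 2 q (V q ξ) : ∀ _ : P, H) r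
    rcases eq_or_ne r q with h | h
    · subst h
      rw [lp.single_apply_self, lp.single_apply_self]
    · rw [lp.single_apply_ne _ _ _ h, lp.single_apply_ne _ _ _ h, map_zero]
  have hketV : ∀ (q : P) (ξ : H), ketV (ι := P) q ξ = lp.single 2 q ξ := fun q ξ => rfl
  -- intertwining
  have hcomm : ∀ p : P, W ∘L Tid p = TV p ∘L W := by
    intro p
    refine ContinuousLinearMap.ext (fun ξ => ?_)
    have hs := lp.hasSum_single (E := fun _ : P => H) ENNReal.ofNat_ne_top ξ
    have h1 := hs.mapL (W ∘L Tid p)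
    have h2 := hs.mapL (TV p ∘L W)
    refine h1.unique ?_
    convert h2 using 2 with q
    show (W ∘L Tid p) (lp.single 2 q (ξ q)) = (TV p ∘L W) (lp.single 2 q (ξ q))
    rw [← hketV]
    have e1 : (W ∘L Tid p) (ketV q (ξ q)) = W (Tid p (ketV q (ξ q))) := rfl
    have e2 : (TV p ∘L W) (ketV q (ξ q)) = TV p (W (ketV q (ξ q))) := rfl
    rw [e1, e2, hTid, hWket, hWket, hTV, hVmul]
    rfl
  -- intertwining for products
  have hprod : ∀ w : List P, W ∘L (w.map Tid).prod = (w.map TV).prod ∘L W := by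
    intro w
    induction w with
    | nil => simp [ContinuousLinearMap.one_def]
    | cons p w ih =>
      rw [List.map_cons, List.map_cons, List.prod_cons, List.prod_cons]
      have e1 : Tid p * (w.map Tid).prod = Tid p ∘L (w.map Tid).prod := rfl
      have e2 : TV p * (w.map TV).prod = TV p ∘L (w.map TV).prod := rfl
      rw [e1, e2, ← ContinuousLinearMap.comp_assoc, hcomm p,
        ContinuousLinearMap.comp_assoc, ih, ← ContinuousLinearMap.comp_assoc]
  refine ⟨W, hWapp, hWnorm, hcomm, ?_⟩
  intro m c ws
  set T := ∑ i, c i • ((ws i).map Tid).prod with hT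
  set S := ∑ i, c i • ((ws i).map TV).prod with hS
  have hTS : ∀ ξ, W (T ξ) = S (W ξ) := by
    intro ξ
    rw [hT, hS]
    rw [ContinuousLinearMap.sum_apply, map_sum, ContinuousLinearMap.sum_apply]
    refine Finset.sum_congr rfl (fun i _ => ?_)
    rw [ContinuousLinearMap.smul_apply, map_smul, ContinuousLinearMap.smul_apply]
    congr 1
    have := congrArg (fun (A : lp (fun _ : P => H) 2 →L[ℂ] lp (fun _ : P => H) 2) => A ξ)
      (hprod (ws i))
    exact this
  refine ContinuousLinearMap.opNorm_le_bound _ (norm_nonneg _) (fun ξ => ?_)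
  calc ‖T ξ‖ = ‖W (T ξ)‖ := (hWnorm _).symm
    _ = ‖S (W ξ)‖ := by rw [hTS]
    _ ≤ ‖S‖ * ‖W ξ‖ := S.le_opNorm _
    _ = ‖S‖ * ‖ξ‖ := by rw [hWnorm]


end
end
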